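/- arXiv:2305.05828 — 6 statements merged into one kernel-verified Lean document; each statement's English description precedes it below -/
import Mathlib

section
/- Suppose that each g^k satisfies E[g^k | 𝓕_k] = ∇f(x^k) almost surely and E[‖e^k‖²] ≤ σ_k² for given σ_k ≥ 0, and that there is a sequence {β_k} of positive reals which is non-decreasing for all sufficiently large k and satisfies Σ_{k=0}^∞ α_k² β_k² σ_k² < ∞. Let {n_k} ⊂ ℕ be a strictly increasing sequence and define r_k := max_{n_k < j ≤ n_{k+1}} ‖Σ_{i=n_k}^{j−1} α_i e^i‖. Then Σ_{k=0}^∞ β_{n_k}² r_k² < ∞ almost surely. -/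
open MeasureTheory Filter Real Set Topology
open scoped ENNReal NNReal

variable {d : ℕ}

local notation "E" => EuclideanSpace ℝ (Fin d)
local notation "⟪" x ", " y "⟫" => @inner ℝ _ _ x y

/-- The normal map `F_nor(z) = ∇f(prox z) + (z - prox z)/λ`. -/
noncomputable def Fnor (f' prox : E → E) (lam : ℝ) (z : E) : E :=
  f' (prox z) + lam⁻¹ • (z - prox z)

/-- The natural residual `F_nat(x) = x - prox(x - λ ∇f x)`. -/
noncomputable def Fnat (f' prox : E → E) (lam : ℝ) (x : E) : E :=
  x - prox (x - lam • f' x)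

/-- The convex subdifferential of an `EReal`-valued function. -/
def subdiff (φ : E → EReal) (x : E) : Set E :=
  {v : E | ∀ y : E, φ x + ((⟪v, y - x⟫ : ℝ) : EReal) ≤ φ y}

/-- The real value of `ψ = f + φ` (finite on the effective domain of `φ`). -/
noncomputable def psiR (f : E → ℝ) (φ : E → EReal) (x : E) : ℝ :=
  f x + (φ x).toReal

/-- The merit function `H_ξ(z) = ψ(prox z) + (ξ λ / 2) ‖F_nor z‖²`. -/
noncomputable def Hmer (f : E → ℝ) (φ : E → EReal) (f' prox : E → E) (lam ξ : ℝ) (z : E) : ℝ :=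
  psiR f φ (prox z) + ξ * lam / 2 * ‖Fnor f' prox lam z‖ ^ 2

/-- The KL inequality at `xbar` with desingularizing function `s ↦ c s^(1-θ)`. -/
def KLAt (f : E → ℝ) (f' : E → E) (φ : E → EReal) (c θ : ℝ) (xbar : E) : Prop :=
  ∃ η > (0 : ℝ), ∃ U ∈ nhds xbar, ∀ v ∈ U,
    0 < |psiR f φ v - psiR f φ xbar| → |psiR f φ v - psiR f φ xbar| < η →
      ∀ w ∈ subdiff φ v,
        1 ≤ c * (1 - θ) * |psiR f φ v - psiR f φ xbar| ^ (-θ) * ‖f' v + w‖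


open Finset
section Aux



lemma inner_ident (u v p q : E) :
    ‖u - q‖ ^ 2 - ‖u - p‖ ^ 2 + ‖v - p‖ ^ 2 - ‖v - q‖ ^ 2 = 2 * ⟪u - v, p - q⟫ := by
  simp only [norm_sub_sq_real, inner_sub_left, inner_sub_right, real_inner_comm]
  ring

lemma prox_cont (φ : E → EReal) (prox : E → E) (lam : ℝ) (hlam : 0 < lam)
    (hφconv : ∀ u v : E, ∀ a b : ℝ, 0 ≤ a → 0 ≤ b → a + b = 1 →
      φ (a • u + b • v) ≤ (a : EReal) * φ u + (b : EReal) * φ v)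
    (hφnebot : ∀ v : E, φ v ≠ ⊥) (hφnetop : ∃ v : E, φ v ≠ ⊤)
    (hprox : ∀ u v : E,
      φ (prox u) + ((‖u - prox u‖ ^ 2 / (2 * lam) : ℝ) : EReal)
        ≤ φ v + ((‖u - v‖ ^ 2 / (2 * lam) : ℝ) : EReal)) :
    Continuous prox := by
  obtain ⟨v₀, hv₀⟩ := hφnetop
  have h2l : (0:ℝ) < 2 * lam := by linarith
  have hfin : ∀ u, φ (prox u) ≠ ⊤ := by
    intro u
    intro htop
    have h := hprox u v₀
    rw [htop] at h
    have hLHS : (⊤ : EReal) + ((‖u - prox u‖ ^ 2 / (2 * lam) : ℝ) : EReal) = ⊤ :=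
      EReal.top_add_of_ne_bot (EReal.coe_ne_bot _)
    rw [hLHS, top_le_iff] at h
    exact (EReal.add_lt_top hv₀ (EReal.coe_ne_top _)).ne h
  -- key inequality in multiplied real form
  have key : ∀ u q : E, φ q ≠ ⊤ →
      4 * lam * (φ (prox u)).toReal + 2 * ‖u - prox u‖ ^ 2 + ‖prox u - q‖ ^ 2
        ≤ 4 * lam * (φ q).toReal + 2 * ‖u - q‖ ^ 2 := by
    intro u q hq
    set p := prox u with hp
    have hφp : φ p = ((φ p).toReal : EReal) := (EReal.coe_toReal (hfin u) (hφnebot _)).symm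
    have hφq : φ q = ((φ q).toReal : EReal) := (EReal.coe_toReal hq (hφnebot _)).symm
    set ap := (φ p).toReal
    set aq := (φ q).toReal
    set m := (2⁻¹ : ℝ) • p + (2⁻¹ : ℝ) • q with hm
    have hconv : φ m ≤ (((ap + aq)/2 : ℝ) : EReal) := by
      have := hφconv p q 2⁻¹ 2⁻¹ (by norm_num) (by norm_num) (by norm_num)
      rw [hφp, hφq] at this
      calc φ m ≤ ((2⁻¹:ℝ) : EReal) * (ap : EReal) + ((2⁻¹:ℝ) : EReal) * (aq : EReal) := this
        _ = (((ap + aq)/2 : ℝ) : EReal) := by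
            rw [← EReal.coe_mul, ← EReal.coe_mul, ← EReal.coe_add, EReal.coe_eq_coe_iff]; ring
    have hφm_netop : φ m ≠ ⊤ := (lt_of_le_of_lt hconv (EReal.coe_lt_top _)).ne
    have hφm : φ m = ((φ m).toReal : EReal) := (EReal.coe_toReal hφm_netop (hφnebot _)).symm
    set am := (φ m).toReal
    have ham : am ≤ (ap + aq)/2 := by
      rw [hφm] at hconv; exact_mod_cast hconv
    have h1 : ap + ‖u - p‖ ^ 2 / (2*lam) ≤ am + ‖u - m‖ ^ 2 / (2*lam) := by
      have := hprox u m
      rw [hφp, hφm, ← EReal.coe_add, ← EReal.coe_add] at this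
      exact_mod_cast this
    have hpar : ‖u - m‖ ^ 2 = (2 * ‖u - p‖ ^ 2 + 2 * ‖u - q‖ ^ 2 - ‖p - q‖ ^ 2) / 4 := by
      have hum : u - m = (2⁻¹ : ℝ) • ((u - p) + (u - q)) := by rw [hm]; module
      have hpq : p - q = (u - q) - (u - p) := by abel
      have hplaw := parallelogram_law_with_norm ℝ (u - p) (u - q)
      rw [hum, hpq, norm_smul]
      have : ‖(u - q) - (u - p)‖ = ‖(u - p) - (u - q)‖ := norm_sub_rev _ _
      rw [this]
      simp only [norm_inv, Real.norm_ofNat]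
      nlinarith [norm_nonneg ((u-p) + (u-q)), norm_nonneg ((u-p) - (u-q))]
    -- multiply h1 by 2*lam
    have h1' : ap * (2*lam) + ‖u - p‖ ^ 2 ≤ am * (2*lam) + ‖u - m‖ ^ 2 := by
      have := mul_le_mul_of_nonneg_right h1 (le_of_lt h2l)
      have e1 : (ap + ‖u - p‖ ^ 2 / (2*lam)) * (2*lam) = ap * (2*lam) + ‖u - p‖ ^ 2 := by
        field_simp
      have e2 : (am + ‖u - m‖ ^ 2 / (2*lam)) * (2*lam) = am * (2*lam) + ‖u - m‖ ^ 2 := by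
        field_simp
      linarith [this, e1.ge, e2.le]
    nlinarith [h1', ham, hpar, h2l]
  have lip : ∀ u v : E, ‖prox u - prox v‖ ≤ 2 * ‖u - v‖ := by
    intro u v
    have k1 := key u (prox v) (hfin v)
    have k2 := key v (prox u) (hfin u)
    rw [show ‖prox v - prox u‖ ^ 2 = ‖prox u - prox v‖ ^ 2 by rw [norm_sub_rev]] at k2
    have hid := inner_ident u v (prox u) (prox v) (d := d)
    have hsum : ‖prox u - prox v‖ ^ 2 ≤ 2 * ⟪u - v, prox u - prox v⟫ := by
      nlinarith [k1, k2, hid]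
    have hcs : ⟪u - v, prox u - prox v⟫ ≤ ‖u - v‖ * ‖prox u - prox v‖ := real_inner_le_norm _ _
    rcases eq_or_lt_of_le (norm_nonneg (prox u - prox v)) with h0 | h0
    · rw [← h0]; positivity
    · nlinarith [hsum, hcs, h0]
  have : LipschitzWith 2 prox := by
    apply LipschitzWith.of_dist_le_mul
    intro u v
    rw [dist_eq_norm, dist_eq_norm]
    simpa using lip u v
  exact this.continuous

lemma condexp_comp_clm {α : Type*} {m m0 : MeasurableSpace α} (hm : m ≤ m0) {μ : Measure α}
    [IsFiniteMeasure μ] {F G : Type*} [NormedAddCommGroup F] [NormedSpace ℝ F] [CompleteSpace F]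
    [NormedAddCommGroup G] [NormedSpace ℝ G] [CompleteSpace G]
    (L : F →L[ℝ] G) {f : α → F} (hf : Integrable f μ) :
    (fun ω => L ((μ[f|m]) ω)) =ᵐ[μ] μ[fun ω => L (f ω)|m] := by
  refine ae_eq_condExp_of_forall_setIntegral_eq hm (L.integrable_comp hf) ?_ ?_ ?_
  · exact fun s _ _ => (L.integrable_comp integrable_condExp).integrableOn
  · intro s hs hμs
    rw [L.integral_comp_comm integrable_condExp.integrableOn,
      setIntegral_condExp hm hf hs, ← L.integral_comp_comm hf.integrableOn]
  · exact ⟨fun ω => L ((μ[f|m]) ω),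
      L.continuous.comp_stronglyMeasurable stronglyMeasurable_condExp, ae_eq_refl _⟩

lemma martingale_abs {Ω : Type*} {m0 : MeasurableSpace Ω} {μ : Measure Ω} [IsFiniteMeasure μ]
    {𝒢 : Filtration ℕ m0} {f : ℕ → Ω → ℝ} (hf : Martingale f 𝒢 μ) :
    Submartingale (fun j ω => |f j ω|) 𝒢 μ := by
  refine ⟨fun j => ?_, fun i j hij => ?_, fun j => (hf.integrable j).abs⟩
  · have := (hf.stronglyAdapted j).norm
    simpa only [Real.norm_eq_abs] using this
  · have hint := hf.integrable j
    filter_upwards [hf.condExp_ae_eq hij,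
      condExp_mono hint hint.abs (ae_of_all μ fun ω => le_abs_self (f j ω)),
      EventuallyLE.trans (condExp_neg (f j) _).symm.le
        (condExp_mono hint.neg hint.abs (ae_of_all μ fun ω => neg_le_abs (f j ω))),
      condExp_nonneg (μ := μ) (m := (𝒢 i : MeasurableSpace Ω))
        (ae_of_all μ fun ω => abs_nonneg (f j ω))]
      with ω h1 h2 h3 h4
    rw [← h1]
    calc |(μ[f j|𝒢 i]) ω| ≤ |(μ[fun a => abs (f j a)|𝒢 i]) ω| := abs_le_abs h2 h3
      _ = (μ[fun a => abs (f j a)|𝒢 i]) ω := abs_of_nonneg h4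

lemma doob_L2 {Ω : Type*} {m0 : MeasurableSpace Ω} {μ : Measure Ω} [IsProbabilityMeasure μ]
    {𝒢 : Filtration ℕ m0} {f : ℕ → Ω → ℝ} (hsub : Submartingale f 𝒢 μ) (hnonneg : 0 ≤ f)
    (hL2 : ∀ i, MemLp (f i) 2 μ) (N : ℕ) :
    ∫⁻ ω, ENNReal.ofReal ((Finset.range (N+1)).sup' Finset.nonempty_range_add_one
        (fun k => f k ω)) ^ 2 ∂μ
      ≤ 4 * ∫⁻ ω, ENNReal.ofReal (f N ω) ^ 2 ∂μ := by
  set M : Ω → ℝ := fun ω => (Finset.range (N+1)).sup' Finset.nonempty_range_add_one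
      (fun k => f k ω) with hM
  have hMmeas : Measurable M :=
    Finset.measurable_range_sup'' fun k _ => ((hsub.stronglyMeasurable k).mono (𝒢.le k)).measurable
  have hMnonneg : ∀ ω, 0 ≤ M ω := fun ω =>
    le_trans (hnonneg 0 ω)
      (Finset.le_sup' (fun k => f k ω) (Finset.mem_range.mpr (Nat.succ_pos N)))
  have hML2 : MemLp M 2 μ := by
    refine (memLp_finset_sum (Finset.range (N+1)) (fun i _ => hL2 i)).of_le
      hMmeas.aestronglyMeasurable (ae_of_all μ fun ω => ?_)
    rw [Real.norm_eq_abs, Real.norm_eq_abs, abs_of_nonneg (hMnonneg ω),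
      abs_of_nonneg (Finset.sum_nonneg fun i _ => hnonneg i ω)]
    exact Finset.sup'_le _ _ fun j hj =>
      Finset.single_le_sum (fun i _ => hnonneg i ω) hj
  set A := ∫⁻ ω, ENNReal.ofReal (M ω) ^ 2 ∂μ with hA
  set B := ∫⁻ ω, ENNReal.ofReal (f N ω) ^ 2 ∂μ with hB
  have hofReal_sq : ∀ (x : ℝ), 0 ≤ x → (‖x‖₊ : ℝ≥0∞) ^ ((2:ℝ≥0∞).toReal) = ENNReal.ofReal x ^ 2 := by
    intro x hx
    rw [← enorm_eq_nnnorm, Real.enorm_eq_ofReal hx]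
    rw [show ((2:ℝ≥0∞).toReal) = ((2:ℕ):ℝ) by norm_num, ENNReal.rpow_natCast]
  have hAfin : A ≠ ⊤ := by
    have h2 := hML2.2
    rw [eLpNorm_lt_top_iff_lintegral_rpow_enorm_lt_top (by norm_num) (by norm_num)] at h2
    rw [hA]
    have : ∫⁻ ω, ENNReal.ofReal (M ω) ^ 2 ∂μ
        = ∫⁻ ω, (‖M ω‖₊ : ℝ≥0∞) ^ ((2:ℝ≥0∞).toReal) ∂μ :=
      lintegral_congr fun ω => (hofReal_sq _ (hMnonneg ω)).symm
    rw [this]; exact h2.ne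
  -- layer cake for A
  have hlayer : ∀ ω, ENNReal.ofReal (M ω) ^ 2
      = ∫⁻ t in Set.Ioi (0:ℝ), (if t ≤ M ω then ENNReal.ofReal (2*t) else 0) := by
    intro ω
    have hind : (fun t => if t ≤ M ω then ENNReal.ofReal (2*t) else 0)
        = (Set.Iic (M ω)).indicator (fun t => ENNReal.ofReal (2*t)) := by
      ext t; simp [Set.indicator_apply, Set.mem_Iic]
    rw [hind, lintegral_indicator measurableSet_Iic _,
      Measure.restrict_restrict measurableSet_Iic,
      show Set.Iic (M ω) ∩ Set.Ioi 0 = Set.Ioc 0 (M ω) by rw [Set.inter_comm, Set.Ioi_inter_Iic]]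
    have hint : IntegrableOn (fun t => 2*t) (Set.Ioc 0 (M ω)) volume :=
      (continuous_const.mul continuous_id).integrableOn_Ioc
    rw [← ofReal_integral_eq_lintegral_ofReal hint]
    · rw [← intervalIntegral.integral_of_le (hMnonneg ω), intervalIntegral.integral_const_mul,
        integral_id,
        show 2 * ((M ω ^ 2 - 0 ^ 2)/2) = (M ω) ^ 2 by ring, ENNReal.ofReal_pow (hMnonneg ω)]
    · filter_upwards [ae_restrict_mem measurableSet_Ioc] with t ht
      have : (0:ℝ) < t := ht.1
      positivity
  -- swap 1
  have hswap1 : A = ∫⁻ t in Set.Ioi (0:ℝ), ENNReal.ofReal (2*t) * μ {ω | t ≤ M ω} := by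
    rw [hA]
    rw [lintegral_congr hlayer, lintegral_lintegral_swap]
    · apply lintegral_congr; intro t
      have hset : (fun ω => if t ≤ M ω then ENNReal.ofReal (2*t) else 0)
          = ({ω | t ≤ M ω}).indicator (fun _ => ENNReal.ofReal (2*t)) := by
        ext ω; simp [Set.indicator_apply]
      rw [hset, lintegral_indicator_const (measurableSet_le measurable_const hMmeas)]
    · apply Measurable.aemeasurable
      exact Measurable.ite (measurableSet_le measurable_snd (hMmeas.comp measurable_fst))
        (ENNReal.measurable_ofReal.comp (measurable_const.mul measurable_snd)) measurable_const
  -- pointwise maximal bound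
  have hmax : ∀ t ∈ Set.Ioi (0:ℝ), ENNReal.ofReal (2*t) * μ {ω | t ≤ M ω}
      ≤ 2 * ∫⁻ ω, (if t ≤ M ω then ENNReal.ofReal (f N ω) else 0) ∂μ := by
    intro t ht
    have ht' : (0:ℝ) < t := ht
    have hmi := maximal_ineq hsub hnonneg (ε := t.toNNReal) N
    rw [show ((t.toNNReal : ℝ)) = t from Real.coe_toNNReal _ ht'.le] at hmi
    have hSmeas : MeasurableSet {ω | t ≤ M ω} := measurableSet_le measurable_const hMmeas
    have hRHS : ENNReal.ofReal (∫ ω in {ω | t ≤ M ω}, f N ω ∂μ)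
        = ∫⁻ ω, (if t ≤ M ω then ENNReal.ofReal (f N ω) else 0) ∂μ := by
      rw [ofReal_integral_eq_lintegral_ofReal ((hsub.integrable N).integrableOn)
        (ae_of_all _ fun ω => hnonneg N ω)]
      rw [← lintegral_indicator hSmeas _]
      apply lintegral_congr; intro ω
      simp [Set.indicator_apply]
    calc ENNReal.ofReal (2*t) * μ {ω | t ≤ M ω}
        = 2 * (ENNReal.ofReal t * μ {ω | t ≤ M ω}) := by
          rw [show (2:ℝ)*t = ((2:ℝ))*t from rfl, ENNReal.ofReal_mul (by norm_num : (0:ℝ) ≤ 2)]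
          rw [ENNReal.ofReal_ofNat, mul_assoc]
      _ ≤ 2 * ∫⁻ ω, (if t ≤ M ω then ENNReal.ofReal (f N ω) else 0) ∂μ := by
          apply mul_le_mul_right _ 2
          rw [← hRHS]
          have : (t.toNNReal : ℝ≥0∞) = ENNReal.ofReal t := rfl
          calc ENNReal.ofReal t * μ {ω | t ≤ M ω}
              = t.toNNReal • μ {ω | t ≤ M ω} := by rw [← this]; simp [ENNReal.smul_def]
            _ ≤ _ := hmi
  -- swap 2
  have hswap2 : ∫⁻ t in Set.Ioi (0:ℝ), ∫⁻ ω, (if t ≤ M ω then ENNReal.ofReal (f N ω) else 0) ∂μ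
      = ∫⁻ ω, ENNReal.ofReal (f N ω) * ENNReal.ofReal (M ω) ∂μ := by
    rw [← lintegral_lintegral_swap]
    · apply lintegral_congr; intro ω
      have hind : (fun t => if t ≤ M ω then ENNReal.ofReal (f N ω) else 0)
          = (Set.Iic (M ω)).indicator (fun _ => ENNReal.ofReal (f N ω)) := by
        ext t; simp [Set.indicator_apply, Set.mem_Iic]
      rw [hind, lintegral_indicator measurableSet_Iic _,
        Measure.restrict_restrict measurableSet_Iic,
        show Set.Iic (M ω) ∩ Set.Ioi 0 = Set.Ioc 0 (M ω) by rw [Set.inter_comm, Set.Ioi_inter_Iic],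
        setLIntegral_const, Real.volume_Ioc, sub_zero]
    · apply Measurable.aemeasurable
      exact Measurable.ite (measurableSet_le measurable_snd ((hMmeas.comp measurable_fst)))
        (ENNReal.measurable_ofReal.comp
          (((hsub.stronglyMeasurable N).mono (𝒢.le N)).measurable.comp measurable_fst))
        measurable_const
  -- combine
  have hAB : A ≤ 2 * ∫⁻ ω, ENNReal.ofReal (f N ω) * ENNReal.ofReal (M ω) ∂μ := by
    rw [hswap1, ← hswap2, ← lintegral_const_mul' 2 _ (by norm_num : (2:ℝ≥0∞) ≠ ⊤)]
    have hGmeas : Measurable fun t : ℝ => ∫⁻ ω, (if t ≤ M ω then ENNReal.ofReal (f N ω) else 0) ∂μ := by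
      apply Measurable.lintegral_prod_right'
        (f := fun p : ℝ × Ω => if p.1 ≤ M p.2 then ENNReal.ofReal (f N p.2) else 0)
      exact Measurable.ite (measurableSet_le measurable_fst ((hMmeas.comp measurable_snd)))
        (ENNReal.measurable_ofReal.comp
          (((hsub.stronglyMeasurable N).mono (𝒢.le N)).measurable.comp measurable_snd))
        measurable_const
    exact setLIntegral_mono_ae (hGmeas.const_mul 2).aemeasurable (ae_of_all _ hmax)
  -- Cauchy–Schwarz
  have hCS : ∫⁻ ω, ENNReal.ofReal (f N ω) * ENNReal.ofReal (M ω) ∂μ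
      ≤ B ^ ((1:ℝ)/2) * A ^ ((1:ℝ)/2) := by
    have hconj : Real.HolderConjugate 2 2 := Real.HolderConjugate.two_two
    have h := ENNReal.lintegral_mul_le_Lp_mul_Lq μ hconj
      (f := fun ω => ENNReal.ofReal (f N ω)) (g := fun ω => ENNReal.ofReal (M ω))
      (ENNReal.measurable_ofReal.comp
        ((hsub.stronglyMeasurable N).mono (𝒢.le N)).measurable).aemeasurable
      (ENNReal.measurable_ofReal.comp hMmeas).aemeasurable
    have hpow : ∀ (x : ℝ≥0∞), x ^ (2:ℝ) = x ^ 2 := by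
      intro x; rw [show (2:ℝ) = ((2:ℕ):ℝ) by norm_num, ENNReal.rpow_natCast]
    simp_rw [Pi.mul_apply, hpow] at h
    exact h
  -- final algebra
  rcases eq_or_ne A 0 with hA0 | hA0
  · rw [hA0]; exact zero_le
  have hArt : A ^ ((1:ℝ)/2) ≠ 0 := by
    simp [ENNReal.rpow_eq_zero_iff, hA0, hAfin]
  have hArt' : A ^ ((1:ℝ)/2) ≠ ⊤ := by
    simp [ENNReal.rpow_eq_top_iff, hA0, hAfin]
  have hroot : A ^ ((1:ℝ)/2) ≤ 2 * B ^ ((1:ℝ)/2) := by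
    have hAA : A = A ^ ((1:ℝ)/2) * A ^ ((1:ℝ)/2) := by
      rw [← ENNReal.rpow_add _ _ hA0 hAfin]; norm_num
    have hA2 : A ≤ 2 * (B ^ ((1:ℝ)/2) * A ^ ((1:ℝ)/2)) :=
      hAB.trans (mul_le_mul_right hCS 2)
    have : A ^ ((1:ℝ)/2) * A ^ ((1:ℝ)/2) ≤ (2 * B ^ ((1:ℝ)/2)) * A ^ ((1:ℝ)/2) := by
      rw [← hAA, mul_assoc]
      exact hA2
    exact (ENNReal.mul_le_mul_iff_left hArt hArt').mp this
  calc A = (A ^ ((1:ℝ)/2)) ^ 2 := by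
        rw [← ENNReal.rpow_natCast (A ^ ((1:ℝ)/2)) 2, ← ENNReal.rpow_mul]; norm_num
    _ ≤ (2 * B ^ ((1:ℝ)/2)) ^ 2 := pow_le_pow_left₀ zero_le hroot 2
    _ = 4 * (B ^ ((1:ℝ)/2)) ^ 2 := by ring
    _ = 4 * B := by
        rw [← ENNReal.rpow_natCast (B ^ ((1:ℝ)/2)) 2, ← ENNReal.rpow_mul]; norm_num

lemma integrable_mul2 {α : Type*} {m : MeasurableSpace α} {μ : Measure α} {f g : α → ℝ}
    (hf : MemLp f 2 μ) (hg : MemLp g 2 μ) : Integrable (fun ω => f ω * g ω) μ := by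
  have h : MemLp (g • f) 1 μ := hf.smul (φ := g) hg (r := 1)
    (hpqr := ⟨by rw [inv_one, ENNReal.inv_two_add_inv_two]⟩)
  have := memLp_one_iff_integrable.mp h
  exact (by simpa [smul_eq_mul, mul_comm] using this : Integrable (f * g) μ)

lemma var_sum {Ω : Type*} {m0 : MeasurableSpace Ω} {P : Measure Ω} [IsProbabilityMeasure P]
    {𝓕 : Filtration ℕ m0} (u : ℕ → Ω → ℝ)
    (hmeas : ∀ i, StronglyMeasurable[𝓕 (i+1)] (u i))
    (hL2 : ∀ i, MemLp (u i) 2 P)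
    (hcond : ∀ i, P[u i|𝓕 i] =ᵐ[P] 0)
    (a : ℕ) : ∀ m : ℕ,
    ∫ ω, (∑ i ∈ Finset.Ico a (a+m), u i ω)^2 ∂P
      ≤ ∑ i ∈ Finset.Ico a (a+m), ∫ ω, (u i ω)^2 ∂P := by
  intro m
  induction m with
  | zero => simp
  | succ m ih =>
    have hSL2 : MemLp (fun ω => ∑ i ∈ Finset.Ico a (a+m), u i ω) 2 P :=
      memLp_finset_sum _ fun i _ => hL2 i
    have hSmeas : StronglyMeasurable[𝓕 (a+m)] (fun ω => ∑ i ∈ Finset.Ico a (a+m), u i ω) := by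
      apply Finset.stronglyMeasurable_fun_sum
      intro i hi
      exact (hmeas i).mono (𝓕.mono (Finset.mem_Ico.mp hi).2)
    have hprod : Integrable (fun ω => (∑ i ∈ Finset.Ico a (a+m), u i ω) * u (a+m) ω) P :=
      integrable_mul2 hSL2 (hL2 _)
    have hcross : ∫ ω, (∑ i ∈ Finset.Ico a (a+m), u i ω) * u (a+m) ω ∂P = 0 := by
      have h1 : P[fun ω => (∑ i ∈ Finset.Ico a (a+m), u i ω) * u (a+m) ω|𝓕 (a+m)]
          =ᵐ[P] fun ω => (∑ i ∈ Finset.Ico a (a+m), u i ω) * (P[u (a+m)|𝓕 (a+m)]) ω := by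
        have := condExp_mul_of_stronglyMeasurable_left (μ := P) (m := (𝓕 (a+m) : MeasurableSpace Ω))
          hSmeas (g := u (a+m)) hprod ((hL2 _).integrable one_le_two)
        exact this
      have h2 : P[fun ω => (∑ i ∈ Finset.Ico a (a+m), u i ω) * u (a+m) ω|𝓕 (a+m)]
          =ᵐ[P] fun _ => (0:ℝ) := by
        filter_upwards [h1, hcond (a+m)] with ω hω hc
        rw [hω]
        simp only [Pi.zero_apply] at hc
        rw [hc, mul_zero]
      calc ∫ ω, (∑ i ∈ Finset.Ico a (a+m), u i ω) * u (a+m) ω ∂P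
          = ∫ ω, (P[fun ω => (∑ i ∈ Finset.Ico a (a+m), u i ω) * u (a+m) ω|𝓕 (a+m)]) ω ∂P :=
            (integral_condExp (𝓕.le (a+m))).symm
        _ = ∫ ω, (0:ℝ) ∂P := integral_congr_ae h2
        _ = 0 := integral_zero _ _
    have hkey : ∫ ω, (∑ i ∈ Finset.Ico a (a+(m+1)), u i ω)^2 ∂P
        = ∫ ω, (∑ i ∈ Finset.Ico a (a+m), u i ω)^2 ∂P + ∫ ω, (u (a+m) ω)^2 ∂P := by
      have hse : a + (m+1) = (a+m) + 1 := rfl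
      rw [hse]
      have hexp : ∀ ω, (∑ i ∈ Finset.Ico a ((a+m)+1), u i ω)^2
          = (∑ i ∈ Finset.Ico a (a+m), u i ω)^2
            + (2 * ((∑ i ∈ Finset.Ico a (a+m), u i ω) * u (a+m) ω) + (u (a+m) ω)^2) := by
        intro ω
        rw [Finset.sum_Ico_succ_top (Nat.le_add_right a m)]
        ring
      have e1 : ∫ ω, ((∑ i ∈ Finset.Ico a (a+m), u i ω)^2
            + (2 * ((∑ i ∈ Finset.Ico a (a+m), u i ω) * u (a+m) ω) + (u (a+m) ω)^2)) ∂P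
          = ∫ ω, (∑ i ∈ Finset.Ico a (a+m), u i ω)^2 ∂P
            + ∫ ω, (2 * ((∑ i ∈ Finset.Ico a (a+m), u i ω) * u (a+m) ω) + (u (a+m) ω)^2) ∂P :=
        integral_add hSL2.integrable_sq ((hprod.const_mul 2).add (hL2 _).integrable_sq)
      have e2 : ∫ ω, (2 * ((∑ i ∈ Finset.Ico a (a+m), u i ω) * u (a+m) ω) + (u (a+m) ω)^2) ∂P
          = ∫ ω, 2 * ((∑ i ∈ Finset.Ico a (a+m), u i ω) * u (a+m) ω) ∂P
            + ∫ ω, (u (a+m) ω)^2 ∂P :=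
        integral_add (hprod.const_mul 2) (hL2 _).integrable_sq
      have e3 : ∫ ω, 2 * ((∑ i ∈ Finset.Ico a (a+m), u i ω) * u (a+m) ω) ∂P
          = 2 * ∫ ω, (∑ i ∈ Finset.Ico a (a+m), u i ω) * u (a+m) ω ∂P :=
        integral_const_mul 2 _
      rw [integral_congr_ae (ae_of_all _ hexp), e1, e2, e3, hcross]
      ring
    rw [hkey, show a + (m+1) = (a+m)+1 from rfl,
      Finset.sum_Ico_succ_top (Nat.le_add_right a m)]
    exact add_le_add_left ih _



lemma euclid_norm_sq (v : E) : ‖v‖^2 = ∑ c, (v c)^2 := by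
  rw [EuclideanSpace.norm_eq, Real.sq_sqrt (Finset.sum_nonneg fun i _ => by positivity)]
  simp [Real.norm_eq_abs, sq_abs]

lemma coord_abs_le (v : E) (c : Fin d) : |v c| ≤ ‖v‖ := by
  rw [← Real.sqrt_sq_eq_abs]
  have h1 : (v c)^2 ≤ ‖v‖^2 := by
    rw [euclid_norm_sq]
    exact Finset.single_le_sum (f := fun i => (v i)^2) (fun i _ => sq_nonneg _)
      (Finset.mem_univ c)
  calc Real.sqrt ((v c)^2) ≤ Real.sqrt (‖v‖^2) := Real.sqrt_le_sqrt h1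
    _ = ‖v‖ := by rw [Real.sqrt_sq (norm_nonneg v)]

lemma sum_coord (s : Finset ℕ) (h : ℕ → E) (c : Fin d) :
    (∑ i ∈ s, h i) c = ∑ i ∈ s, h i c := by
  induction s using Finset.cons_induction with
  | empty => rfl
  | cons a s ha ih =>
    rw [Finset.sum_cons, Finset.sum_cons, ← ih]
    rfl

lemma memℒp_abs {Ω : Type*} {m0 : MeasurableSpace Ω} {P : Measure Ω} {f : Ω → ℝ}
    (h : MemLp f 2 P) : MemLp (fun ω => |f ω|) 2 P := by
  simpa [Real.norm_eq_abs] using h.norm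

end Aux
lemma block_bound {d : ℕ} {Ω : Type*} {m0 : MeasurableSpace Ω} (P : Measure Ω)
    [IsProbabilityMeasure P] (𝓕 : Filtration ℕ m0)
    (eV : ℕ → Ω → EuclideanSpace ℝ (Fin d)) (α : ℕ → ℝ)
    (hemeas : ∀ i, StronglyMeasurable[𝓕 (i+1)] (eV i))
    (heL2 : ∀ i, MemLp (eV i) 2 P)
    (hcondc : ∀ i (c : Fin d), P[fun ω => eV i ω c|𝓕 i] =ᵐ[P] fun _ => (0:ℝ))
    (a b : ℕ) (hab : a < b) :
    ∫⁻ ω, ENNReal.ofReal (((Finset.Icc (a+1) b).sup' (Finset.nonempty_Icc.mpr hab)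
        (fun j => ‖∑ i ∈ Finset.Ico a j, α i • eV i ω‖))^2) ∂P
      ≤ 4 * ENNReal.ofReal (∑ i ∈ Finset.Ico a b, (α i)^2 * ∫ ω, ‖eV i ω‖^2 ∂P) := by
  -- coordinate facts
  have hecSM : ∀ i (c : Fin d), StronglyMeasurable[𝓕 (i+1)] (fun ω => eV i ω c) := fun i c =>
    (EuclideanSpace.proj (𝕜 := ℝ) c).continuous.comp_stronglyMeasurable (hemeas i)
  have hecL2 : ∀ i (c : Fin d), MemLp (fun ω => eV i ω c) 2 P := by
    intro i c
    refine (heL2 i).of_le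
      (((hecSM i c).mono (𝓕.le _)).aestronglyMeasurable) (ae_of_all _ fun ω => ?_)
    rw [Real.norm_eq_abs]
    exact coord_abs_le (eV i ω) c
  -- the coordinate martingales
  set Y : Fin d → ℕ → Ω → ℝ :=
    fun c j ω => ∑ i ∈ Finset.Ico a (min j b), α i * eV i ω c with hY
  have hYadp : ∀ c j, StronglyMeasurable[𝓕 j] (Y c j) := by
    intro c j
    apply Finset.stronglyMeasurable_fun_sum
    intro i hi
    have hij : i + 1 ≤ j := by
      have := (Finset.mem_Ico.mp hi).2
      have := min_le_left j b
      omega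
    exact (stronglyMeasurable_const.mul ((hecSM i c).mono (𝓕.mono hij)))
  have hYL2 : ∀ c j, MemLp (Y c j) 2 P := fun c j =>
    memLp_finset_sum _ fun i _ => (hecL2 i c).const_mul (α i)
  have hDcond : ∀ i (c : Fin d),
      P[fun ω => α i * eV i ω c|𝓕 i] =ᵐ[P] fun _ => (0:ℝ) := by
    intro i c
    have h1 := condExp_smul (μ := P) (m := (𝓕 i : MeasurableSpace Ω)) (α i)
      (fun ω => eV i ω c)
    filter_upwards [h1, hcondc i c] with ω hω hc
    have : (fun ω => α i * eV i ω c) = α i • (fun ω => eV i ω c) := by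
      funext ω'; simp [smul_eq_mul]
    rw [this, hω]
    simp only [Pi.smul_apply, smul_eq_mul]
    rw [hc, mul_zero]
  have hYmart : ∀ c, Martingale (Y c) 𝓕 P := by
    intro c
    refine martingale_nat (fun j => hYadp c j)
      (fun j => (hYL2 c j).integrable one_le_two) (fun j => ?_)
    rcases lt_or_ge j a with hj1 | hj2
    · -- both sums empty
      have h1 : Y c j = fun _ => (0:ℝ) := by
        funext ω
        rw [hY]
        simp only
        rw [Finset.Ico_eq_empty (by
          intro hcon
          have := min_le_left j b
          omega), Finset.sum_empty]
      have h2 : Y c (j+1) = fun _ => (0:ℝ) := by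
        funext ω
        rw [hY]
        simp only
        rw [Finset.Ico_eq_empty (by
          intro hcon
          have := min_le_left (j+1) b
          omega), Finset.sum_empty]
      rw [h1, h2, show (fun _ : Ω => (0:ℝ)) = (0 : Ω → ℝ) from rfl, condExp_zero]
    · rcases lt_or_ge j b with hj3 | hj4
      · -- increment step
        have hsplit : Y c (j+1) = Y c j + fun ω => α j * eV j ω c := by
          funext ω
          rw [hY]
          simp only [Pi.add_apply]
          rw [min_eq_left (Nat.succ_le_of_lt hj3), min_eq_left hj3.le,
            Finset.sum_Ico_succ_top hj2]
        have hadd := condExp_add (μ := P) (m := (𝓕 j : MeasurableSpace Ω))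
          ((hYL2 c j).integrable one_le_two)
          (((hecL2 j c).const_mul (α j)).integrable one_le_two)
          (f := Y c j) (g := fun ω => α j * eV j ω c)
        have hself : P[Y c j|𝓕 j] = Y c j :=
          condExp_of_stronglyMeasurable (𝓕.le j) (hYadp c j)
            ((hYL2 c j).integrable one_le_two)
        have hD := hDcond j c
        have hDj : P[fun ω => α j * eV j ω c|𝓕 j] =ᵐ[P] fun _ => (0:ℝ) := by
          have hle : 𝓕 j ≤ 𝓕 j := le_rfl
          exact hD.mono fun ω hω => hω
        rw [hsplit]
        filter_upwards [hadd, hDj] with ω hω hz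
        rw [hω, Pi.add_apply, hself, hz]
        simp
      · -- after the block
        have heq : Y c (j+1) = Y c j := by
          funext ω
          rw [hY]
          simp only
          rw [min_eq_right hj4, min_eq_right (le_trans hj4 (Nat.le_succ j))]
        rw [heq, condExp_of_stronglyMeasurable (𝓕.le j) (hYadp c j)
          ((hYL2 c j).integrable one_le_two)]
  -- Doob per coordinate
  have habs : ∀ c, Submartingale (fun j ω => |Y c j ω|) 𝓕 P := fun c =>
    martingale_abs (hYmart c)
  have hdoob : ∀ c : Fin d,
      ∫⁻ ω, ENNReal.ofReal ((Finset.range (b+1)).sup' Finset.nonempty_range_add_one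
          (fun k => |Y c k ω|)) ^ 2 ∂P
        ≤ 4 * ∫⁻ ω, ENNReal.ofReal (|Y c b ω|) ^ 2 ∂P := by
    intro c
    exact doob_L2 (habs c) (fun j ω => abs_nonneg _)
      (fun j => memℒp_abs (hYL2 c j)) b
  -- variance bound per coordinate
  have hvarc : ∀ c : Fin d, ∫ ω, (Y c b ω)^2 ∂P
      ≤ ∑ i ∈ Finset.Ico a b, (α i)^2 * ∫ ω, (eV i ω c)^2 ∂P := by
    intro c
    have hvs := var_sum (P := P) (𝓕 := 𝓕) (fun i ω => α i * eV i ω c)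
      (fun i => stronglyMeasurable_const.mul (hecSM i c))
      (fun i => (hecL2 i c).const_mul (α i))
      (fun i => hDcond i c) a (b - a)
    rw [show a + (b - a) = b by omega] at hvs
    have hYb : ∀ ω, Y c b ω = ∑ i ∈ Finset.Ico a b, α i * eV i ω c := by
      intro ω; rw [hY]; simp only [min_self]
    calc ∫ ω, (Y c b ω)^2 ∂P = ∫ ω, (∑ i ∈ Finset.Ico a b, α i * eV i ω c)^2 ∂P := by
          apply integral_congr_ae (ae_of_all _ fun ω => by rw [hYb ω])
      _ ≤ ∑ i ∈ Finset.Ico a b, ∫ ω, (α i * eV i ω c)^2 ∂P := hvs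
      _ = ∑ i ∈ Finset.Ico a b, (α i)^2 * ∫ ω, (eV i ω c)^2 ∂P := by
          apply Finset.sum_congr rfl
          intro i _
          rw [show (fun ω => (α i * eV i ω c)^2) = fun ω => (α i)^2 * (eV i ω c)^2 from
            funext fun ω => by ring, integral_const_mul]
  -- pointwise comparison of the vector max with coordinate maxima
  have hsupnonneg : ∀ (c : Fin d) ω, 0 ≤ (Finset.range (b+1)).sup' Finset.nonempty_range_add_one
      (fun k => |Y c k ω|) := fun c ω =>
    le_trans (abs_nonneg (Y c 0 ω)) (Finset.le_sup' (fun k => |Y c k ω|) (Finset.mem_range.mpr (by omega : 0 < b+1)))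
  have hpt : ∀ ω, ENNReal.ofReal (((Finset.Icc (a+1) b).sup' (Finset.nonempty_Icc.mpr hab)
      (fun j => ‖∑ i ∈ Finset.Ico a j, α i • eV i ω‖))^2)
      ≤ ∑ c, (ENNReal.ofReal ((Finset.range (b+1)).sup' Finset.nonempty_range_add_one
        (fun k => |Y c k ω|))) ^ 2 := by
    intro ω
    obtain ⟨j₀, hj₀mem, hj₀⟩ := Finset.exists_mem_eq_sup' (Finset.nonempty_Icc.mpr hab)
      (fun j => ‖∑ i ∈ Finset.Ico a j, α i • eV i ω‖)
    have hj₀le : j₀ ≤ b := (Finset.mem_Icc.mp hj₀mem).2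
    have hcoord : ∀ c : Fin d, (∑ i ∈ Finset.Ico a j₀, α i • eV i ω) c = Y c j₀ ω := by
      intro c
      rw [sum_coord, hY]
      simp only [min_eq_left hj₀le]
      exact Finset.sum_congr rfl fun i _ => rfl
    have hRsq : ((Finset.Icc (a+1) b).sup' (Finset.nonempty_Icc.mpr hab)
        (fun j => ‖∑ i ∈ Finset.Ico a j, α i • eV i ω‖))^2 = ∑ c, (Y c j₀ ω)^2 := by
      rw [hj₀, euclid_norm_sq]
      exact Finset.sum_congr rfl fun c _ => by rw [hcoord c]
    rw [hRsq, ENNReal.ofReal_sum_of_nonneg (fun c _ => sq_nonneg _)]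
    apply Finset.sum_le_sum
    intro c _
    have h1 : |Y c j₀ ω| ≤ (Finset.range (b+1)).sup' Finset.nonempty_range_add_one
        (fun k => |Y c k ω|) := Finset.le_sup' (fun k => |Y c k ω|) (Finset.mem_range.mpr (by omega))
    calc ENNReal.ofReal ((Y c j₀ ω)^2)
        = ENNReal.ofReal (|Y c j₀ ω|^2) := by rw [sq_abs]
      _ = (ENNReal.ofReal (|Y c j₀ ω|)) ^ 2 := ENNReal.ofReal_pow (abs_nonneg _) 2
      _ ≤ _ := pow_le_pow_left₀ zero_le (ENNReal.ofReal_le_ofReal h1) 2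
  -- measurability of coordinate maxima
  have hsupmeas : ∀ c : Fin d, Measurable fun ω => (Finset.range (b+1)).sup'
      Finset.nonempty_range_add_one (fun k => |Y c k ω|) := by
    intro c
    exact Finset.measurable_range_sup'' fun k _ =>
      ((hYadp c k).mono (𝓕.le k)).measurable.abs
  -- per-coordinate Doob + variance
  have hperc : ∀ c : Fin d,
      ∫⁻ ω, (ENNReal.ofReal ((Finset.range (b+1)).sup' Finset.nonempty_range_add_one
          (fun k => |Y c k ω|))) ^ 2 ∂P
        ≤ 4 * ENNReal.ofReal (∑ i ∈ Finset.Ico a b, (α i)^2 * ∫ ω, (eV i ω c)^2 ∂P) := by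
    intro c
    refine (hdoob c).trans ?_
    have h5 : ∫⁻ ω, ENNReal.ofReal (|Y c b ω|) ^ 2 ∂P
        = ENNReal.ofReal (∫ ω, (Y c b ω)^2 ∂P) := by
      rw [ofReal_integral_eq_lintegral_ofReal ((hYL2 c b).integrable_sq)
        (ae_of_all _ fun ω => sq_nonneg _)]
      apply lintegral_congr; intro ω
      rw [← ENNReal.ofReal_pow (abs_nonneg _), sq_abs]
    rw [h5]
    exact mul_le_mul_right (ENNReal.ofReal_le_ofReal (hvarc c)) 4
  -- sum over coordinates
  have hVnonneg : ∀ c : Fin d, (0:ℝ) ≤ ∑ i ∈ Finset.Ico a b, (α i)^2 * ∫ ω, (eV i ω c)^2 ∂P :=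
    fun c => Finset.sum_nonneg fun i _ =>
      mul_nonneg (sq_nonneg _) (integral_nonneg fun ω => sq_nonneg _)
  have hnormsum : ∑ c, ∑ i ∈ Finset.Ico a b, (α i)^2 * ∫ ω, (eV i ω c)^2 ∂P
      = ∑ i ∈ Finset.Ico a b, (α i)^2 * ∫ ω, ‖eV i ω‖^2 ∂P := by
    rw [Finset.sum_comm]
    apply Finset.sum_congr rfl
    intro i _
    rw [← Finset.mul_sum]
    congr 1
    rw [← integral_finset_sum _ (fun c _ => (hecL2 i c).integrable_sq)]
    exact integral_congr_ae (ae_of_all _ fun ω => by simp [euclid_norm_sq])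
  calc ∫⁻ ω, ENNReal.ofReal (((Finset.Icc (a+1) b).sup' (Finset.nonempty_Icc.mpr hab)
        (fun j => ‖∑ i ∈ Finset.Ico a j, α i • eV i ω‖))^2) ∂P
      ≤ ∫⁻ ω, ∑ c, (ENNReal.ofReal ((Finset.range (b+1)).sup' Finset.nonempty_range_add_one
          (fun k => |Y c k ω|))) ^ 2 ∂P := lintegral_mono hpt
    _ = ∑ c, ∫⁻ ω, (ENNReal.ofReal ((Finset.range (b+1)).sup' Finset.nonempty_range_add_one
          (fun k => |Y c k ω|))) ^ 2 ∂P :=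
        lintegral_finset_sum _ fun c _ =>
          (ENNReal.measurable_ofReal.comp (hsupmeas c)).pow_const 2
    _ ≤ ∑ c, 4 * ENNReal.ofReal (∑ i ∈ Finset.Ico a b, (α i)^2 * ∫ ω, (eV i ω c)^2 ∂P) :=
        Finset.sum_le_sum fun c _ => hperc c
    _ = 4 * ∑ c, ENNReal.ofReal (∑ i ∈ Finset.Ico a b, (α i)^2 * ∫ ω, (eV i ω c)^2 ∂P) := by
        rw [Finset.mul_sum]
    _ = 4 * ENNReal.ofReal (∑ c, ∑ i ∈ Finset.Ico a b, (α i)^2 * ∫ ω, (eV i ω c)^2 ∂P) := by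
        rw [ENNReal.ofReal_sum_of_nonneg fun c _ => hVnonneg c]
    _ = 4 * ENNReal.ofReal (∑ i ∈ Finset.Ico a b, (α i)^2 * ∫ ω, ‖eV i ω‖^2 ∂P) := by
        rw [hnormsum]
theorem stmt2
    (f : E → ℝ) (f' : E → E) (φ : E → EReal) (prox : E → E) (lam : ℝ)
    (hlam : 0 < lam)
    (hf : ∀ v : E, HasGradientAt f (f' v) v) (hf'cont : Continuous f')
    (hφconv : ∀ u v : E, ∀ a b : ℝ, 0 ≤ a → 0 ≤ b → a + b = 1 →
      φ (a • u + b • v) ≤ (a : EReal) * φ u + (b : EReal) * φ v)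
    (hφlsc : LowerSemicontinuous φ)
    (hφnebot : ∀ v : E, φ v ≠ ⊥) (hφnetop : ∃ v : E, φ v ≠ ⊤)
    (hprox : ∀ u v : E,
      φ (prox u) + ((‖u - prox u‖ ^ 2 / (2 * lam) : ℝ) : EReal)
        ≤ φ v + ((‖u - v‖ ^ 2 / (2 * lam) : ℝ) : EReal))
    {Ω : Type} [m0 : MeasurableSpace Ω] (P : Measure Ω) [IsProbabilityMeasure P]
    (𝓕 : Filtration ℕ m0)
    (α : ℕ → ℝ) (hα : ∀ k, 0 < α k)
    (z x g e : ℕ → Ω → E) (z0 : E)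
    (hz0 : ∀ ω, z 0 ω = z0)
    (hx : ∀ k ω, x k ω = prox (z k ω))
    (hzrec : ∀ k ω, z (k + 1) ω = z k ω - α k • (g k ω + lam⁻¹ • (z k ω - x k ω)))
    (he : ∀ k ω, e k ω = g k ω - f' (x k ω))
    (hgmeas : ∀ k, StronglyMeasurable[𝓕 (k + 1)] (g k))
    (hgL2 : ∀ k, MemLp (g k) 2 P)
    (σ : ℕ → ℝ) (hσ : ∀ k, 0 ≤ σ k)
    (hunbiased : ∀ k, P[g k|𝓕 k] =ᵐ[P] fun ω => f' (x k ω))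
    (hvar : ∀ k, ∫⁻ ω, (‖e k ω‖₊ : ℝ≥0∞) ^ 2 ∂P ≤ ENNReal.ofReal ((σ k) ^ 2))
    (β : ℕ → ℝ) (hβpos : ∀ k, 0 < β k)
    (hβmono : ∃ K : ℕ, ∀ k ≥ K, β k ≤ β (k + 1))
    (hsum : Summable fun k => (α k) ^ 2 * (β k) ^ 2 * (σ k) ^ 2)
    (n : ℕ → ℕ) (hn : StrictMono n) :
    ∀ᵐ ω ∂P, Summable fun k =>
      (β (n k)) ^ 2 *
        ((Finset.Icc (n k + 1) (n (k + 1))).sup'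
            (Finset.nonempty_Icc.mpr (hn (Nat.lt_succ_self k)))
            (fun j => ‖∑ i ∈ Finset.Ico (n k) j, α i • e i ω‖)) ^ 2 := by
  classical
  obtain ⟨K, hK⟩ := hβmono
  have hβle : ∀ a b : ℕ, K ≤ a → a ≤ b → β a ≤ β b := by
    intro a b ha hab
    induction b, hab using Nat.le_induction with
    | base => exact le_rfl
    | succ b hb ih => exact le_trans ih (hK b (ha.trans hb))
  have hproxcont : Continuous prox := prox_cont φ prox lam hlam hφconv hφnebot hφnetop hprox
  have hzmeas : ∀ k, StronglyMeasurable[𝓕 k] (z k) := by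
    intro k
    induction k with
    | zero =>
      rw [show z 0 = fun _ => z0 from funext hz0]
      exact stronglyMeasurable_const
    | succ k ih =>
      rw [show z (k+1) = fun ω => z k ω - α k • (g k ω + lam⁻¹ • (z k ω - prox (z k ω))) from
        funext fun ω => by rw [hzrec k ω, hx k ω]]
      have hz' : StronglyMeasurable[𝓕 (k+1)] (z k) := ih.mono (𝓕.mono k.le_succ)
      have hp : StronglyMeasurable[𝓕 (k+1)] (fun ω => prox (z k ω)) :=
        hproxcont.comp_stronglyMeasurable hz'
      exact hz'.sub (((hgmeas k).add ((hz'.sub hp).const_smul lam⁻¹)).const_smul (α k))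
  have hxmeas : ∀ k, StronglyMeasurable[𝓕 k] (x k) := by
    intro k
    rw [show x k = fun ω => prox (z k ω) from funext (hx k)]
    exact hproxcont.comp_stronglyMeasurable (hzmeas k)
  have hfxmeas : ∀ k, StronglyMeasurable[𝓕 k] (fun ω => f' (x k ω)) := fun k =>
    hf'cont.comp_stronglyMeasurable (hxmeas k)
  have hemeas : ∀ k, StronglyMeasurable[𝓕 (k+1)] (e k) := by
    intro k
    rw [show e k = fun ω => g k ω - f' (x k ω) from funext (he k)]
    exact (hgmeas k).sub ((hfxmeas k).mono (𝓕.mono k.le_succ))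
  have hemeas0 : ∀ k, StronglyMeasurable (e k) := fun k => (hemeas k).mono (𝓕.le _)
  have heL2 : ∀ k, MemLp (e k) 2 P := by
    intro k
    refine ⟨(hemeas0 k).aestronglyMeasurable, ?_⟩
    rw [eLpNorm_lt_top_iff_lintegral_rpow_enorm_lt_top (by norm_num) (by norm_num)]
    calc ∫⁻ ω, (‖e k ω‖₊ : ℝ≥0∞) ^ ((2:ℝ≥0∞).toReal) ∂P
        = ∫⁻ ω, (‖e k ω‖₊ : ℝ≥0∞) ^ (2:ℕ) ∂P := by
          apply lintegral_congr
          intro ω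
          rw [show ((2:ℝ≥0∞).toReal) = ((2:ℕ):ℝ) by norm_num, ENNReal.rpow_natCast]
      _ ≤ ENNReal.ofReal ((σ k)^2) := hvar k
      _ < ⊤ := ENNReal.ofReal_lt_top
  have hesq : ∀ i, ∫ ω, ‖e i ω‖^2 ∂P ≤ (σ i)^2 := by
    intro i
    have h1 : ENNReal.ofReal (∫ ω, ‖e i ω‖^2 ∂P) = ∫⁻ ω, (‖e i ω‖₊ : ℝ≥0∞)^(2:ℕ) ∂P := by
      rw [ofReal_integral_eq_lintegral_ofReal ((heL2 i).norm.integrable_sq)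
        (ae_of_all _ fun ω => sq_nonneg _)]
      apply lintegral_congr
      intro ω
      rw [ENNReal.ofReal_pow (norm_nonneg _), ofReal_norm, enorm_eq_nnnorm]
    have h2 : ENNReal.ofReal (∫ ω, ‖e i ω‖^2 ∂P) ≤ ENNReal.ofReal ((σ i)^2) := by
      rw [h1]; exact hvar i
    exact (ENNReal.ofReal_le_ofReal_iff (by positivity)).mp h2
  have hgint : ∀ k, Integrable (g k) P := fun k => (hgL2 k).integrable one_le_two
  have hfxL2 : ∀ k, MemLp (fun ω => f' (x k ω)) 2 P := by
    intro k
    rw [show (fun ω => f' (x k ω)) = fun ω => g k ω - e k ω from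
      funext fun ω => by rw [he k ω]; abel]
    exact (hgL2 k).sub (heL2 k)
  have hfxint : ∀ k, Integrable (fun ω => f' (x k ω)) P := fun k =>
    (hfxL2 k).integrable one_le_two
  have hcond : ∀ k, P[e k|𝓕 k] =ᵐ[P] fun _ => (0 : EuclideanSpace ℝ (Fin d)) := by
    intro k
    rw [show e k = g k - fun ω => f' (x k ω) from funext fun ω => by
      rw [he k ω]; rfl]
    have h1 := condExp_sub (μ := P) (m := (𝓕 k : MeasurableSpace Ω)) (hgint k) (hfxint k)
    have h2 : P[fun ω => f' (x k ω)|𝓕 k] = fun ω => f' (x k ω) :=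
      condExp_of_stronglyMeasurable (𝓕.le k) (hfxmeas k) (hfxint k)
    filter_upwards [h1, hunbiased k] with ω hω hu
    rw [hω, Pi.sub_apply, hu, h2]
    simp
  have hconde : ∀ k (c : Fin d), P[fun ω => e k ω c|𝓕 k] =ᵐ[P] fun _ => (0:ℝ) := by
    intro k c
    have h3 := condexp_comp_clm (𝓕.le k) (EuclideanSpace.proj (𝕜 := ℝ) c)
      ((heL2 k).integrable one_le_two)
    have h4 : P[fun ω => e k ω c|𝓕 k]
        = P[fun ω => (EuclideanSpace.proj (𝕜 := ℝ) c) (e k ω)|𝓕 k] := rfl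
    rw [h4]
    refine h3.symm.trans ?_
    filter_upwards [hcond k] with ω hω
    rw [hω]
    simp
  -- abbreviations
  set T : ℕ → Ω → ℝ := fun k ω =>
    (β (n k)) ^ 2 *
      ((Finset.Icc (n k + 1) (n (k + 1))).sup'
          (Finset.nonempty_Icc.mpr (hn (Nat.lt_succ_self k)))
          (fun j => ‖∑ i ∈ Finset.Ico (n k) j, α i • e i ω‖)) ^ 2 with hT
  have hTnonneg : ∀ k ω, 0 ≤ T k ω := fun k ω => mul_nonneg (sq_nonneg _) (sq_nonneg _)
  set v : ℕ → ℝ := fun i => (α i)^2 * (β i)^2 * (σ i)^2 with hv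
  have hvnonneg : ∀ i, 0 ≤ v i := fun i => by positivity
  -- per-block bound
  have hblock : ∀ k, K ≤ n k → ∫⁻ ω, ENNReal.ofReal (T k ω) ∂P
      ≤ 4 * ENNReal.ofReal (∑ i ∈ Finset.Ico (n k) (n (k+1)), v i) := by
    intro k hKnk
    have hbb := block_bound P 𝓕 e α hemeas heL2 hconde (n k) (n (k+1)) (hn (Nat.lt_succ_self k))
    have hreal : (β (n k))^2 * (∑ i ∈ Finset.Ico (n k) (n (k+1)), (α i)^2 * ∫ ω, ‖e i ω‖^2 ∂P)
        ≤ ∑ i ∈ Finset.Ico (n k) (n (k+1)), v i := by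
      rw [Finset.mul_sum]
      apply Finset.sum_le_sum
      intro i hi
      have hnki : n k ≤ i := (Finset.mem_Ico.mp hi).1
      have hβi : β (n k) ≤ β i := hβle _ _ hKnk hnki
      have hβsq : (β (n k))^2 ≤ (β i)^2 :=
        pow_le_pow_left₀ (hβpos _).le hβi 2
      have hInn : (0:ℝ) ≤ ∫ ω, ‖e i ω‖^2 ∂P := integral_nonneg fun ω => sq_nonneg _
      calc (β (n k))^2 * ((α i)^2 * ∫ ω, ‖e i ω‖^2 ∂P)
          ≤ (β i)^2 * ((α i)^2 * (σ i)^2) := by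
            apply mul_le_mul hβsq
            · exact mul_le_mul_of_nonneg_left (hesq i) (sq_nonneg _)
            · positivity
            · positivity
        _ = v i := by rw [hv]; ring
    calc ∫⁻ ω, ENNReal.ofReal (T k ω) ∂P
        = ENNReal.ofReal ((β (n k))^2) *
            ∫⁻ ω, ENNReal.ofReal (((Finset.Icc (n k + 1) (n (k + 1))).sup'
              (Finset.nonempty_Icc.mpr (hn (Nat.lt_succ_self k)))
              (fun j => ‖∑ i ∈ Finset.Ico (n k) j, α i • e i ω‖)) ^ 2) ∂P := by
          rw [← lintegral_const_mul' _ _ ENNReal.ofReal_ne_top]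
          apply lintegral_congr
          intro ω
          rw [← ENNReal.ofReal_mul (sq_nonneg _)]
      _ ≤ ENNReal.ofReal ((β (n k))^2) *
            (4 * ENNReal.ofReal (∑ i ∈ Finset.Ico (n k) (n (k+1)),
              (α i)^2 * ∫ ω, ‖e i ω‖^2 ∂P)) := mul_le_mul_right hbb _
      _ = 4 * (ENNReal.ofReal ((β (n k))^2) * ENNReal.ofReal (∑ i ∈ Finset.Ico (n k) (n (k+1)),
              (α i)^2 * ∫ ω, ‖e i ω‖^2 ∂P)) := by ring
      _ = 4 * ENNReal.ofReal ((β (n k))^2 * ∑ i ∈ Finset.Ico (n k) (n (k+1)),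
              (α i)^2 * ∫ ω, ‖e i ω‖^2 ∂P) := by
          rw [ENNReal.ofReal_mul (sq_nonneg _)]
      _ ≤ 4 * ENNReal.ofReal (∑ i ∈ Finset.Ico (n k) (n (k+1)), v i) :=
          mul_le_mul_right (ENNReal.ofReal_le_ofReal hreal) 4
  -- block sums telescope
  set w : ℕ → ℝ := fun k => ∑ i ∈ Finset.Ico (n k) (n (k+1)), v i with hw
  have hwnonneg : ∀ k, 0 ≤ w k := fun k => Finset.sum_nonneg fun i _ => hvnonneg i
  have hblocksum : ∀ m, ∑ k ∈ Finset.range m, w (k+K) = ∑ i ∈ Finset.Ico (n K) (n (m+K)), v i := by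
    intro m
    induction m with
    | zero => simp
    | succ m ih =>
      rw [Finset.sum_range_succ, ih, hw]
      rw [show m+1+K = (m+K)+1 by omega]
      exact Finset.sum_Ico_consecutive v (hn.monotone (by omega)) (hn.monotone (Nat.le_succ _))
  have hwle : ∀ s : Finset ℕ, ∑ k ∈ s, ENNReal.ofReal (w (k+K)) ≤ ENNReal.ofReal (∑' i, v i) := by
    intro s
    obtain ⟨m, hm⟩ := s.exists_nat_subset_range
    calc ∑ k ∈ s, ENNReal.ofReal (w (k+K))
        = ENNReal.ofReal (∑ k ∈ s, w (k+K)) :=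
          (ENNReal.ofReal_sum_of_nonneg fun k _ => hwnonneg _).symm
      _ ≤ ENNReal.ofReal (∑ k ∈ Finset.range m, w (k+K)) :=
          ENNReal.ofReal_le_ofReal
            (Finset.sum_le_sum_of_subset_of_nonneg hm fun k _ _ => hwnonneg _)
      _ = ENNReal.ofReal (∑ i ∈ Finset.Ico (n K) (n (m+K)), v i) := by rw [hblocksum m]
      _ ≤ ENNReal.ofReal (∑' i, v i) :=
          ENNReal.ofReal_le_ofReal (Summable.sum_le_tsum _ (fun i _ => hvnonneg i) hsum)
  -- measurability of T
  have hTmeas : ∀ k, Measurable fun ω => ENNReal.ofReal (T k ω) := by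
    intro k
    have hsupR : Measurable fun ω => (Finset.Icc (n k + 1) (n (k + 1))).sup'
        (Finset.nonempty_Icc.mpr (hn (Nat.lt_succ_self k)))
        (fun j => ‖∑ i ∈ Finset.Ico (n k) j, α i • e i ω‖) := by
      have hm := Finset.measurable_sup' (Finset.nonempty_Icc.mpr (hn (Nat.lt_succ_self k)))
        (f := fun j ω => ‖∑ i ∈ Finset.Ico (n k) j, α i • e i ω‖)
        (fun j _ => (Finset.measurable_sum _
          fun i _ => ((hemeas0 i).measurable.const_smul (α i))).norm)
      have heq : (Finset.Icc (n k + 1) (n (k + 1))).sup'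
          (Finset.nonempty_Icc.mpr (hn (Nat.lt_succ_self k)))
          (fun j ω => ‖∑ i ∈ Finset.Ico (n k) j, α i • e i ω‖)
          = fun ω => (Finset.Icc (n k + 1) (n (k + 1))).sup'
            (Finset.nonempty_Icc.mpr (hn (Nat.lt_succ_self k)))
            (fun j => ‖∑ i ∈ Finset.Ico (n k) j, α i • e i ω‖) := by
        funext ω
        exact Finset.sup'_apply _ _ _
      rw [heq] at hm
      exact hm
    exact ENNReal.measurable_ofReal.comp ((measurable_const.mul (hsupR.pow_const 2)))
  -- finiteness of the total expectation
  have htsum : ∫⁻ ω, ∑' k, ENNReal.ofReal (T (k+K) ω) ∂P ≠ ⊤ := by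
    rw [lintegral_tsum fun k => (hTmeas (k+K)).aemeasurable]
    have hle : ∑' k, ∫⁻ ω, ENNReal.ofReal (T (k+K) ω) ∂P
        ≤ ∑' k, 4 * ENNReal.ofReal (w (k+K)) := by
      apply ENNReal.tsum_le_tsum
      intro k
      exact hblock (k+K) (le_trans (Nat.le_add_left K k) hn.le_apply)
    refine ne_top_of_le_ne_top ?_ hle
    rw [ENNReal.tsum_mul_left]
    have : ∑' k, ENNReal.ofReal (w (k+K)) ≤ ENNReal.ofReal (∑' i, v i) := by
      rw [ENNReal.tsum_eq_iSup_sum]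
      exact iSup_le hwle
    exact ENNReal.mul_ne_top (by norm_num)
      (lt_of_le_of_lt this ENNReal.ofReal_lt_top).ne
  have hae := ae_lt_top (Measurable.ennreal_tsum fun k => hTmeas (k+K)) htsum
  filter_upwards [hae] with ω hω
  have hsummable : Summable fun k => T (k+K) ω := by
    have h1 := ENNReal.summable_toReal hω.ne
    refine (summable_congr fun k => ?_).mp h1
    rw [ENNReal.toReal_ofReal (hTnonneg _ ω)]
  exact (summable_nat_add_iff K).mp hsummable
end

section
/- Suppose there is L ≥ 0 such that ‖∇f(u) − ∇f(v)‖ ≤ L‖u − v‖ for all u, v in the closed convex hull of {x^k : k ∈ ℕ}. Then for all natural numbers 0 ≤ m < n, writing τ := τ_{m,n} and τ̄ := (L + 2/λ)·exp((L + 2/λ)·τ), it holds that d_{m,n} ≤ max_{m < i ≤ n} ‖z^i − z^m‖ ≤ (1 + τ·τ̄)·(τ·‖F_nor(z^m)‖ + s_{m,n}), and ‖e^{m,n}‖ ≤ τ̄·τ²·‖F_nor(z^m)‖ + (1 + τ̄·τ)·s_{m,n}. -/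
open MeasureTheory Filter Real Set Topology
open scoped ENNReal NNReal

variable {d : ℕ}

local notation "E" => EuclideanSpace ℝ (Fin d)
local notation "⟪" x ", " y "⟫" => @inner ℝ _ _ x y

lemma prox_phi_ne_top {φ : E → EReal} {prox : E → E} {lam : ℝ}
    (hφnetop : ∃ v : E, φ v ≠ ⊤)
    (hprox : ∀ u v : E,
      φ (prox u) + ((‖u - prox u‖ ^ 2 / (2 * lam) : ℝ) : EReal)
        ≤ φ v + ((‖u - v‖ ^ 2 / (2 * lam) : ℝ) : EReal)) (u : E) :
    φ (prox u) ≠ ⊤ := by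
  obtain ⟨v, hv⟩ := hφnetop
  intro h
  have h1 := hprox u v
  rw [h, EReal.top_add_coe] at h1
  exact (EReal.add_lt_top hv (EReal.coe_ne_top _)).ne (top_le_iff.mp h1)

lemma prox_key {φ : E → EReal} {prox : E → E} {lam : ℝ} (hlam : 0 < lam)
    (hφconv : ∀ u v : E, ∀ a b : ℝ, 0 ≤ a → 0 ≤ b → a + b = 1 →
      φ (a • u + b • v) ≤ (a : EReal) * φ u + (b : EReal) * φ v)
    (hφnebot : ∀ v : E, φ v ≠ ⊥) (hφnetop : ∃ v : E, φ v ≠ ⊤)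
    (hprox : ∀ u v : E,
      φ (prox u) + ((‖u - prox u‖ ^ 2 / (2 * lam) : ℝ) : EReal)
        ≤ φ v + ((‖u - v‖ ^ 2 / (2 * lam) : ℝ) : EReal)) (u v : E) :
    lam * ((φ (prox u)).toReal - (φ (prox v)).toReal)
      ≤ ⟪u - prox u, prox u - prox v⟫ := by
  set pu := prox u
  set pv := prox v
  set a := (φ pu).toReal with ha
  set b := (φ pv).toReal with hb
  have hA : φ pu = (a : EReal) := (EReal.coe_toReal (prox_phi_ne_top hφnetop hprox u) (hφnebot _)).symm
  have hB : φ pv = (b : EReal) := (EReal.coe_toReal (prox_phi_ne_top hφnetop hprox v) (hφnebot _)).symm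
  set I := ⟪u - pu, pv - pu⟫ with hI
  set N := ‖pv - pu‖ ^ 2 with hNdef
  have hN : 0 ≤ N := by positivity
  have key : ∀ t : ℝ, 0 < t → t ≤ 1 →
      lam * (a - b) ≤ ⟪u - pu, pu - pv⟫ + t * N / 2 := by
    intro t ht0 ht1
    set w := pu + t • (pv - pu) with hw
    have hw' : w = (1 - t) • pu + t • pv := by rw [hw]; module
    have hc := hφconv pu pv (1 - t) t (by linarith) ht0.le (by ring)
    rw [← hw', hA, hB] at hc
    have hc2 : φ w ≤ (((1 - t) * a + t * b : ℝ) : EReal) := by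
      refine hc.trans_eq ?_
      norm_cast
    have hwtop : φ w ≠ ⊤ := ne_top_of_le_ne_top (EReal.coe_ne_top _) hc2
    set c := (φ w).toReal with hcdef
    have hC : φ w = (c : EReal) := (EReal.coe_toReal hwtop (hφnebot _)).symm
    have hc' : c ≤ (1 - t) * a + t * b := by
      rw [hC] at hc2; exact_mod_cast hc2
    have hp := hprox u w
    rw [hA, hC] at hp
    have hp' : a + ‖u - pu‖ ^ 2 / (2 * lam) ≤ c + ‖u - w‖ ^ 2 / (2 * lam) := by
      exact_mod_cast hp
    have hnorm : ‖u - w‖ ^ 2 = ‖u - pu‖ ^ 2 - 2 * t * I + t ^ 2 * N := by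
      have huw : u - w = (u - pu) - t • (pv - pu) := by rw [hw]; abel
      rw [huw, @norm_sub_sq_real, real_inner_smul_right, norm_smul, Real.norm_eq_abs,
        mul_pow, sq_abs, hI, hNdef]
      ring
    have hlam2 : (0:ℝ) < 2 * lam := by linarith
    have hsplit : (‖u - pu‖ ^ 2 - 2 * t * I + t ^ 2 * N) / (2 * lam)
        = ‖u - pu‖ ^ 2 / (2 * lam) + (-2 * t * I + t ^ 2 * N) / (2 * lam) := by ring
    have h6 : t * (a - b) ≤ (-2 * t * I + t ^ 2 * N) / (2 * lam) := by
      rw [hnorm, hsplit] at hp'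
      linarith
    have h7 : t * (a - b) * (2 * lam) ≤ -2 * t * I + t ^ 2 * N := (le_div_iff₀ hlam2).mp h6
    have h8 : 2 * lam * (a - b) ≤ -2 * I + t * N := by
      have h9 : t * (2 * lam * (a - b)) ≤ t * (-2 * I + t * N) := by nlinarith [h7]
      exact (mul_le_mul_iff_right₀ ht0).mp h9
    have hIflip : ⟪u - pu, pu - pv⟫ = -I := by
      rw [hI, ← neg_sub pv pu, inner_neg_right]
    rw [hIflip]
    linarith
  apply le_of_forall_pos_le_add
  intro ε hε
  set t := min 1 (ε / (N / 2 + 1)) with htdef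
  have ht0 : 0 < t := lt_min one_pos (div_pos hε (by positivity))
  have ht1 : t ≤ 1 := min_le_left _ _
  have htb : t * (N / 2 + 1) ≤ ε := (le_div_iff₀ (by positivity)).mp (min_le_right _ _)
  have := key t ht0 ht1
  have htN : t * N / 2 ≤ ε := by nlinarith [ht0.le, hN]
  linarith

lemma prox_nonexp {φ : E → EReal} {prox : E → E} {lam : ℝ} (hlam : 0 < lam)
    (hφconv : ∀ u v : E, ∀ a b : ℝ, 0 ≤ a → 0 ≤ b → a + b = 1 →
      φ (a • u + b • v) ≤ (a : EReal) * φ u + (b : EReal) * φ v)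
    (hφnebot : ∀ v : E, φ v ≠ ⊥) (hφnetop : ∃ v : E, φ v ≠ ⊤)
    (hprox : ∀ u v : E,
      φ (prox u) + ((‖u - prox u‖ ^ 2 / (2 * lam) : ℝ) : EReal)
        ≤ φ v + ((‖u - v‖ ^ 2 / (2 * lam) : ℝ) : EReal)) (u v : E) :
    ‖prox u - prox v‖ ≤ ‖u - v‖ := by
  have h1 := prox_key hlam hφconv hφnebot hφnetop hprox u v
  have h2 := prox_key hlam hφconv hφnebot hφnetop hprox v u
  set pu := prox u
  set pv := prox v
  have h3 : 0 ≤ ⟪u - pu, pu - pv⟫ + ⟪v - pv, pv - pu⟫ := by linarith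
  have h4 : ⟪v - pv, pv - pu⟫ = ⟪pv - v, pu - pv⟫ := by
    rw [← inner_neg_neg (𝕜 := ℝ)]; congr 1 <;> abel
  have h5 : ⟪u - pu, pu - pv⟫ + ⟪pv - v, pu - pv⟫ = ⟪u - v, pu - pv⟫ - ‖pu - pv‖ ^ 2 := by
    rw [← inner_add_left]
    have : (u - pu) + (pv - v) = (u - v) - (pu - pv) := by abel
    rw [this, inner_sub_left, real_inner_self_eq_norm_sq]
  have h6 : ‖pu - pv‖ ^ 2 ≤ ⟪u - v, pu - pv⟫ := by
    rw [h4] at h3; linarith [h5 ▸ h3]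
  have h7 := real_inner_le_norm (u - v) (pu - pv)
  nlinarith [norm_nonneg (pu - pv), norm_nonneg (u - v)]

/-- Bounds on the iterate displacement and aggregated error over a time window. -/
theorem stmt3
    (f : E → ℝ) (f' : E → E) (φ : E → EReal) (prox : E → E) (lam : ℝ)
    (hlam : 0 < lam)
    (hf : ∀ v : E, HasGradientAt f (f' v) v) (hf'cont : Continuous f')
    (hφconv : ∀ u v : E, ∀ a b : ℝ, 0 ≤ a → 0 ≤ b → a + b = 1 →
      φ (a • u + b • v) ≤ (a : EReal) * φ u + (b : EReal) * φ v)
    (hφlsc : LowerSemicontinuous φ)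
    (hφnebot : ∀ v : E, φ v ≠ ⊥) (hφnetop : ∃ v : E, φ v ≠ ⊤)
    (hprox : ∀ u v : E,
      φ (prox u) + ((‖u - prox u‖ ^ 2 / (2 * lam) : ℝ) : EReal)
        ≤ φ v + ((‖u - v‖ ^ 2 / (2 * lam) : ℝ) : EReal))
    (α : ℕ → ℝ) (hα : ∀ k, 0 < α k)
    (z x gseq e : ℕ → E)
    (hx : ∀ k, x k = prox (z k))
    (hzrec : ∀ k, z (k + 1) = z k - α k • (gseq k + lam⁻¹ • (z k - x k)))
    (he : ∀ k, e k = gseq k - f' (x k))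
    (L : ℝ) (hL : 0 ≤ L)
    (hLip : ∀ u ∈ closure (convexHull ℝ (Set.range x)),
      ∀ v ∈ closure (convexHull ℝ (Set.range x)), ‖f' u - f' v‖ ≤ L * ‖u - v‖)
    (m n : ℕ) (hmn : m < n) :
    ∀ τ τb s : ℝ,
      τ = ∑ i ∈ Finset.Ico m n, α i →
      τb = (L + 2 / lam) * Real.exp ((L + 2 / lam) * τ) →
      s = (Finset.Icc (m + 1) n).sup' (Finset.nonempty_Icc.mpr (by omega))
            (fun j => ‖∑ i ∈ Finset.Ico m j, α i • e i‖) →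
      ((Finset.Icc (m + 1) n).sup' (Finset.nonempty_Icc.mpr (by omega)) (fun i => ‖x i - x m‖)
          ≤ (Finset.Icc (m + 1) n).sup' (Finset.nonempty_Icc.mpr (by omega)) (fun i => ‖z i - z m‖) ∧
        (Finset.Icc (m + 1) n).sup' (Finset.nonempty_Icc.mpr (by omega)) (fun i => ‖z i - z m‖)
          ≤ (1 + τ * τb) * (τ * ‖Fnor f' prox lam (z m)‖ + s)) ∧
      ‖z n - z m + τ • Fnor f' prox lam (z m)‖
          ≤ τb * τ ^ 2 * ‖Fnor f' prox lam (z m)‖ + (1 + τb * τ) * s := by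
  
  intro τ τb s hτ hτb hs
  set F := Fnor f' prox lam (z m) with hF
  set C := L + 2 / lam with hCdef
  have hC : (0:ℝ) ≤ C := by rw [hCdef]; positivity
  have hne : ∀ u v : E, ‖prox u - prox v‖ ≤ ‖u - v‖ :=
    prox_nonexp hlam hφconv hφnebot hφnetop hprox
  -- one-step recursion in terms of Fnor
  have hstep : ∀ k, z (k + 1) = z k - α k • (Fnor f' prox lam (z k) + e k) := by
    intro k
    rw [hzrec k, he k, hx k]
    simp only [Fnor]
    module
  -- telescoping
  have htel : ∀ j, m ≤ j →
      z j - z m = -∑ i ∈ Finset.Ico m j, α i • (Fnor f' prox lam (z i) + e i) := by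
    intro j hj
    induction j, hj using Nat.le_induction with
    | base => simp
    | succ j hj ih =>
      rw [hstep j, Finset.sum_Ico_succ_top hj, neg_add, ← ih]
      abel
  have hid : ∀ j, m ≤ j → z j - z m + (∑ i ∈ Finset.Ico m j, α i) • F
      = (∑ i ∈ Finset.Ico m j, α i • (F - Fnor f' prox lam (z i)))
        - ∑ i ∈ Finset.Ico m j, α i • e i := by
    intro j hj
    calc z j - z m + (∑ i ∈ Finset.Ico m j, α i) • F
        = (∑ i ∈ Finset.Ico m j, α i • F)
          - ∑ i ∈ Finset.Ico m j, α i • (Fnor f' prox lam (z i) + e i) := by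
          rw [htel j hj, Finset.sum_smul]; abel
      _ = _ := by
          rw [← Finset.sum_sub_distrib, ← Finset.sum_sub_distrib]
          refine Finset.sum_congr rfl fun i _ => ?_
          rw [smul_add, smul_sub]
          abel
  have hmem : ∀ k : ℕ, x k ∈ closure (convexHull ℝ (Set.range x)) := fun k =>
    subset_closure (subset_convexHull ℝ _ (Set.mem_range_self k))
  have hxz : ∀ i : ℕ, ‖x i - x m‖ ≤ ‖z i - z m‖ := by
    intro i; rw [hx i, hx m]; exact hne _ _
  have hFlip : ∀ i, ‖F - Fnor f' prox lam (z i)‖ ≤ C * ‖z i - z m‖ := by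
    intro i
    have h1 : F - Fnor f' prox lam (z i)
        = (f' (x m) - f' (x i)) + lam⁻¹ • ((z m - x m) - (z i - x i)) := by
      rw [hF]
      simp only [Fnor, ← hx]
      module
    have h2 := hLip (x m) (hmem m) (x i) (hmem i)
    have h3 := hxz i
    have h4 : ‖(z m - x m) - (z i - x i)‖ ≤ ‖z i - z m‖ + ‖x i - x m‖ := by
      have hrw : (z m - x m) - (z i - x i) = -(z i - z m) + (x i - x m) := by abel
      rw [hrw]
      exact (norm_add_le _ _).trans (by rw [norm_neg])
    have h5 : ‖lam⁻¹ • ((z m - x m) - (z i - x i))‖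
        = lam⁻¹ * ‖(z m - x m) - (z i - x i)‖ := by
      rw [norm_smul, Real.norm_eq_abs, abs_of_pos (by positivity)]
    have hlaminv : (0:ℝ) < lam⁻¹ := by positivity
    calc ‖F - Fnor f' prox lam (z i)‖
        ≤ ‖f' (x m) - f' (x i)‖ + ‖lam⁻¹ • ((z m - x m) - (z i - x i))‖ := by
          rw [h1]; exact norm_add_le _ _
      _ ≤ L * ‖x m - x i‖ + lam⁻¹ * (‖z i - z m‖ + ‖x i - x m‖) := by
          rw [h5]
          exact add_le_add h2 (mul_le_mul_of_nonneg_left h4 hlaminv.le)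
      _ ≤ C * ‖z i - z m‖ := by
          rw [norm_sub_rev (x m) (x i), hCdef, div_eq_mul_inv]
          have := norm_nonneg (z i - z m)
          linarith [mul_le_mul_of_nonneg_left h3 hL, mul_le_mul_of_nonneg_left h3 hlaminv.le]
  -- s facts
  have hse : ∀ j, m < j → j ≤ n → ‖∑ i ∈ Finset.Ico m j, α i • e i‖ ≤ s := by
    intro j h1 h2
    rw [hs]
    exact Finset.le_sup' (fun j => ‖∑ i ∈ Finset.Ico m j, α i • e i‖)
      (Finset.mem_Icc.mpr ⟨by omega, h2⟩)
  have hs0 : (0:ℝ) ≤ s := le_trans (norm_nonneg _) (hse (m+1) (by omega) (by omega))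
  have hτ0 : (0:ℝ) ≤ τ := by
    rw [hτ]; exact Finset.sum_nonneg fun i _ => (hα i).le
  have hττ : ∀ j, j ≤ n → ∑ i ∈ Finset.Ico m j, α i ≤ τ := by
    intro j hj
    rw [hτ]
    exact Finset.sum_le_sum_of_subset_of_nonneg (Finset.Ico_subset_Ico le_rfl hj)
      (fun i _ _ => (hα i).le)
  set A := τ * ‖F‖ + s with hA
  have hA0 : (0:ℝ) ≤ A := add_nonneg (mul_nonneg hτ0 (norm_nonneg _)) hs0
  -- window bound
  have hwin : ∀ j, m < j → j ≤ n →
      ‖z j - z m + (∑ i ∈ Finset.Ico m j, α i) • F‖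
        ≤ C * (∑ i ∈ Finset.Ico m j, α i * ‖z i - z m‖) + s := by
    intro j h1 h2
    rw [hid j h1.le]
    calc ‖(∑ i ∈ Finset.Ico m j, α i • (F - Fnor f' prox lam (z i)))
          - ∑ i ∈ Finset.Ico m j, α i • e i‖
        ≤ ‖∑ i ∈ Finset.Ico m j, α i • (F - Fnor f' prox lam (z i))‖
          + ‖∑ i ∈ Finset.Ico m j, α i • e i‖ := norm_sub_le _ _
      _ ≤ (∑ i ∈ Finset.Ico m j, α i * (C * ‖z i - z m‖)) + s := by
          refine add_le_add ((norm_sum_le _ _).trans (Finset.sum_le_sum fun i _ => ?_))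
            (hse j h1 h2)
          rw [norm_smul, Real.norm_eq_abs, abs_of_pos (hα i)]
          exact mul_le_mul_of_nonneg_left (hFlip i) (hα i).le
      _ = C * (∑ i ∈ Finset.Ico m j, α i * ‖z i - z m‖) + s := by
          rw [Finset.mul_sum]
          congr 1
          exact Finset.sum_congr rfl fun i _ => by ring
  have hkey : ∀ j, m < j → j ≤ n →
      ‖z j - z m‖ ≤ A + C * ∑ i ∈ Finset.Ico m j, α i * ‖z i - z m‖ := by
    intro j h1 h2
    have hT0 : (0:ℝ) ≤ ∑ i ∈ Finset.Ico m j, α i := Finset.sum_nonneg fun i _ => (hα i).le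
    have h4 : ‖z j - z m‖ ≤ ‖z j - z m + (∑ i ∈ Finset.Ico m j, α i) • F‖
        + ‖(∑ i ∈ Finset.Ico m j, α i) • F‖ := by
      have h := norm_sub_le (z j - z m + (∑ i ∈ Finset.Ico m j, α i) • F)
        ((∑ i ∈ Finset.Ico m j, α i) • F)
      simpa using h
    have h5 : ‖(∑ i ∈ Finset.Ico m j, α i) • F‖ ≤ τ * ‖F‖ := by
      rw [norm_smul, Real.norm_eq_abs, abs_of_nonneg hT0]
      exact mul_le_mul_of_nonneg_right (hττ j h2) (norm_nonneg _)
    have h6 := hwin j h1 h2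
    rw [hA]
    linarith
  -- telescoping product identity
  have hPitel : ∀ j, m ≤ j →
      1 + ∑ i ∈ Finset.Ico m j, (C * α i * ∏ l ∈ Finset.Ico m i, (1 + C * α l))
        = ∏ i ∈ Finset.Ico m j, (1 + C * α i) := by
    intro j hj
    induction j, hj using Nat.le_induction with
    | base => simp
    | succ j hj ih =>
      rw [Finset.sum_Ico_succ_top hj, Finset.prod_Ico_succ_top hj]
      linear_combination ih
  -- Gronwall
  have hgron : ∀ j, m ≤ j → ∀ i, m ≤ i → i ≤ j → i ≤ n →
      ‖z i - z m‖ ≤ A * ∏ l ∈ Finset.Ico m i, (1 + C * α l) := by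
    intro j hj
    induction j, hj using Nat.le_induction with
    | base =>
      intro i him hij _
      have : i = m := le_antisymm hij him
      subst this
      simp only [Finset.Ico_self, Finset.prod_empty, mul_one, sub_self, norm_zero]
      exact hA0
    | succ j hj ih =>
      intro i him hij hin
      by_cases hi : i ≤ j
      · exact ih i him hi hin
      · have hieq : i = j + 1 := by omega
        subst hieq
        have h6 := hkey (j+1) (by omega) hin
        have h7 : ∑ l ∈ Finset.Ico m (j+1), α l * ‖z l - z m‖
            ≤ ∑ l ∈ Finset.Ico m (j+1), α l * (A * ∏ p ∈ Finset.Ico m l, (1 + C * α p)) := by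
          refine Finset.sum_le_sum fun l hl => ?_
          rw [Finset.mem_Ico] at hl
          exact mul_le_mul_of_nonneg_left (ih l hl.1 (by omega) (by omega)) (hα l).le
        calc ‖z (j+1) - z m‖
            ≤ A + C * ∑ l ∈ Finset.Ico m (j+1), α l * ‖z l - z m‖ := h6
          _ ≤ A + C * ∑ l ∈ Finset.Ico m (j+1),
                α l * (A * ∏ p ∈ Finset.Ico m l, (1 + C * α p)) :=
              add_le_add_right (mul_le_mul_of_nonneg_left h7 hC) A
          _ = A * (1 + ∑ l ∈ Finset.Ico m (j+1),
                (C * α l * ∏ p ∈ Finset.Ico m l, (1 + C * α p))) := by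
              rw [mul_add, mul_one, Finset.mul_sum, Finset.mul_sum]
              congr 1
              exact Finset.sum_congr rfl fun l _ => by ring
          _ = A * ∏ l ∈ Finset.Ico m (j+1), (1 + C * α l) := by
              rw [hPitel (j+1) (by omega)]
  have hexp : ∀ j, m ≤ j → j ≤ n →
      (∏ i ∈ Finset.Ico m j, (1 + C * α i)) ≤ Real.exp (C * τ) := by
    intro j hj hjn
    calc ∏ i ∈ Finset.Ico m j, (1 + C * α i)
        ≤ ∏ i ∈ Finset.Ico m j, Real.exp (C * α i) :=
          Finset.prod_le_prod (fun i _ => by linarith [mul_nonneg hC (hα i).le])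
            (fun i _ => by linarith [Real.add_one_le_exp (C * α i)])
      _ = Real.exp (∑ i ∈ Finset.Ico m j, C * α i) := (Real.exp_sum _ _).symm
      _ ≤ Real.exp (C * τ) := by
          apply Real.exp_le_exp.mpr
          rw [← Finset.mul_sum]
          exact mul_le_mul_of_nonneg_left (hττ j hjn) hC
  have hbound : ∀ i, m ≤ i → i ≤ n → ‖z i - z m‖ ≤ A * Real.exp (C * τ) := fun i h1 h2 =>
    (hgron n hmn.le i h1 h2 h2).trans
      (mul_le_mul_of_nonneg_left (hexp i h1 h2) hA0)
  have hτb' : τb = C * Real.exp (C * τ) := hτb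
  have hexppos := Real.exp_pos (C * τ)
  have hexp1 : Real.exp (C * τ) ≤ 1 + τ * τb := by
    rw [hτb']
    have h := Real.add_one_le_exp (-(C * τ))
    have h2 : Real.exp (C * τ) * (1 - C * τ) ≤ 1 := by
      have h3 := mul_le_mul_of_nonneg_left h hexppos.le
      rw [← Real.exp_add] at h3
      simp only [add_neg_cancel, Real.exp_zero] at h3
      linarith [h3]
    nlinarith [mul_nonneg (mul_nonneg hC hτ0) hexppos.le]
  have hnem : (Finset.Icc (m+1) n).Nonempty := Finset.nonempty_Icc.mpr (by omega)
  refine ⟨⟨?_, ?_⟩, ?_⟩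
  · refine Finset.sup'_le _ _ fun i hi =>
      (hxz i).trans (Finset.le_sup' (fun i => ‖z i - z m‖) hi)
  · refine Finset.sup'_le _ _ fun i hi => ?_
    rw [Finset.mem_Icc] at hi
    refine (hbound i (by omega) hi.2).trans ?_
    have := mul_le_mul_of_nonneg_left hexp1 hA0
    rw [hA] at this ⊢
    linarith
  · have h3a := hid n hmn.le
    have hτsum : ∑ i ∈ Finset.Ico m n, α i = τ := hτ.symm
    have h6 := hwin n hmn le_rfl
    rw [hτsum] at h6
    have h7 : ∑ i ∈ Finset.Ico m n, α i * ‖z i - z m‖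
        ≤ ∑ i ∈ Finset.Ico m n, α i * (A * Real.exp (C * τ)) := by
      refine Finset.sum_le_sum fun i hi => ?_
      rw [Finset.mem_Ico] at hi
      exact mul_le_mul_of_nonneg_left (hbound i hi.1 (by omega)) (hα i).le
    rw [← Finset.sum_mul, hτsum] at h7
    have h8 : ‖z n - z m + τ • F‖ ≤ C * (τ * (A * Real.exp (C * τ))) + s := by
      refine h6.trans ?_
      have := mul_le_mul_of_nonneg_left h7 hC
      linarith
    have h9 : C * (τ * (A * Real.exp (C * τ))) = τ * τb * A := by
      rw [hτb']; ring
    rw [h9, hA] at h8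
    nlinarith [h8]
end

section
/- Suppose there is L ≥ 0 such that ‖∇f(u) − ∇f(v)‖ ≤ L‖u − v‖ for all u, v in the closed convex hull of {x^k : k ∈ ℕ}. Then for all natural numbers 0 ≤ m < n: ψ(x^n) − ψ(x^m) ≤ (L/2 − 1/λ)·‖x^n − x^m‖² + ⟨F_nor(z^m), x^n − x^m⟩ + (1/λ)·⟨z^n − z^m, x^n − x^m⟩. -/
open MeasureTheory Filter Real Set Topology
open scoped ENNReal NNReal

variable {d : ℕ}

local notation "E" => EuclideanSpace ℝ (Fin d)
local notation "⟪" x ", " y "⟫" => @inner ℝ _ _ x y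

/-- Descent-type estimate for the objective function. -/
theorem stmt4
    (f : E → ℝ) (f' : E → E) (φ : E → EReal) (prox : E → E) (lam : ℝ)
    (hlam : 0 < lam)
    (hf : ∀ v : E, HasGradientAt f (f' v) v) (hf'cont : Continuous f')
    (hφconv : ∀ u v : E, ∀ a b : ℝ, 0 ≤ a → 0 ≤ b → a + b = 1 →
      φ (a • u + b • v) ≤ (a : EReal) * φ u + (b : EReal) * φ v)
    (hφlsc : LowerSemicontinuous φ)
    (hφnebot : ∀ v : E, φ v ≠ ⊥) (hφnetop : ∃ v : E, φ v ≠ ⊤)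
    (hprox : ∀ u v : E,
      φ (prox u) + ((‖u - prox u‖ ^ 2 / (2 * lam) : ℝ) : EReal)
        ≤ φ v + ((‖u - v‖ ^ 2 / (2 * lam) : ℝ) : EReal))
    (α : ℕ → ℝ) (hα : ∀ k, 0 < α k)
    (z x gseq e : ℕ → E)
    (hx : ∀ k, x k = prox (z k))
    (hzrec : ∀ k, z (k + 1) = z k - α k • (gseq k + lam⁻¹ • (z k - x k)))
    (he : ∀ k, e k = gseq k - f' (x k))
    (L : ℝ) (hL : 0 ≤ L)
    (hLip : ∀ u ∈ closure (convexHull ℝ (Set.range x)),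
      ∀ v ∈ closure (convexHull ℝ (Set.range x)), ‖f' u - f' v‖ ≤ L * ‖u - v‖)
    (m n : ℕ) (hmn : m < n) :
    psiR f φ (x n) - psiR f φ (x m) ≤
      (L / 2 - 1 / lam) * ‖x n - x m‖ ^ 2
        + ⟪Fnor f' prox lam (z m), x n - x m⟫
        + (1 / lam) * ⟪z n - z m, x n - x m⟫ := by

  set dd : EuclideanSpace ℝ (Fin d) := x n - x m with hd
  obtain ⟨v₀, hv₀⟩ := hφnetop
  -- φ (x k) is finite
  have hfin : ∀ k, φ (x k) ≠ ⊤ := by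
    intro k hk
    have h := hprox (z k) v₀
    rw [← hx k, hk, EReal.top_add_coe] at h
    exact absurd h (not_le.2 (EReal.add_lt_top hv₀ (EReal.coe_ne_top _)))
  have hr : ∀ k, φ (x k) = (((φ (x k)).toReal : ℝ) : EReal) :=
    fun k => (EReal.coe_toReal (hfin k) (hφnebot _)).symm
  -- key inequality for φ with parameter t
  have hA : ∀ t : ℝ, 0 < t → t ≤ 1 →
      (φ (x n)).toReal - (φ (x m)).toReal
        ≤ lam⁻¹ * ⟪z n - x n, dd⟫ + t * (‖dd‖ ^ 2 / (2 * lam)) := by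
    intro t ht0 ht1
    have h1 := hprox (z n) ((1 - t) • x n + t • x m)
    rw [← hx n] at h1
    have h2 := hφconv (x n) (x m) (1 - t) t (by linarith) ht0.le (by ring)
    have h2' : φ ((1 - t) • x n + t • x m)
        ≤ (((1 - t) * (φ (x n)).toReal + t * (φ (x m)).toReal : ℝ) : EReal) := by
      refine h2.trans_eq ?_
      rw [hr n, hr m]
      simp only [EReal.toReal_coe, ← EReal.coe_mul, ← EReal.coe_add]
    have h3 : (((φ (x n)).toReal + ‖z n - x n‖ ^ 2 / (2 * lam) : ℝ) : EReal)
        ≤ (((1 - t) * (φ (x n)).toReal + t * (φ (x m)).toReal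
            + ‖z n - ((1 - t) • x n + t • x m)‖ ^ 2 / (2 * lam) : ℝ) : EReal) := by
      rw [EReal.coe_add, EReal.coe_add, ← hr n]
      exact h1.trans (add_le_add_left h2' _)
    have h4 : (φ (x n)).toReal + ‖z n - x n‖ ^ 2 / (2 * lam)
        ≤ (1 - t) * (φ (x n)).toReal + t * (φ (x m)).toReal
            + ‖z n - ((1 - t) • x n + t • x m)‖ ^ 2 / (2 * lam) := by
      exact_mod_cast h3
    have hnorm : ‖z n - ((1 - t) • x n + t • x m)‖ ^ 2
        = ‖z n - x n‖ ^ 2 + 2 * (t * ⟪z n - x n, dd⟫) + t ^ 2 * ‖dd‖ ^ 2 := by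
      have hzy : z n - ((1 - t) • x n + t • x m) = (z n - x n) + t • dd := by
        rw [hd]; module
      rw [hzy, norm_add_sq_real, real_inner_smul_right, norm_smul,
        Real.norm_eq_abs, abs_of_pos ht0]
      ring
    rw [hnorm, add_div, add_div] at h4
    have e1 : 2 * (t * ⟪z n - x n, dd⟫) / (2 * lam) = t * (lam⁻¹ * ⟪z n - x n, dd⟫) := by
      field_simp
    have e2 : t ^ 2 * ‖dd‖ ^ 2 / (2 * lam) = t * (t * (‖dd‖ ^ 2 / (2 * lam))) := by
      ring
    rw [e1, e2] at h4
    have h5 : t * ((φ (x n)).toReal - (φ (x m)).toReal)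
        ≤ t * (lam⁻¹ * ⟪z n - x n, dd⟫ + t * (‖dd‖ ^ 2 / (2 * lam))) := by
      nlinarith [h4]
    exact (mul_le_mul_iff_right₀ ht0).1 h5
  -- pass to the limit t → 0⁺
  have hphi : (φ (x n)).toReal - (φ (x m)).toReal ≤ lam⁻¹ * ⟪z n - x n, dd⟫ := by
    by_contra hcon
    push_neg at hcon
    set A := lam⁻¹ * ⟪z n - x n, dd⟫ with hAdef
    set B := ‖dd‖ ^ 2 / (2 * lam) with hBdef
    have hB0 : 0 ≤ B := div_nonneg (sq_nonneg _) (by linarith)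
    have hε0 : 0 < (φ (x n)).toReal - (φ (x m)).toReal - A := by linarith
    set ε := (φ (x n)).toReal - (φ (x m)).toReal - A with hεdef
    have ht0 : 0 < min 1 (ε / (B + 1)) := lt_min one_pos (div_pos hε0 (by linarith))
    have hkey := hA (min 1 (ε / (B + 1))) ht0 (min_le_left _ _)
    have htB : min 1 (ε / (B + 1)) * B ≤ ε / (B + 1) * B :=
      mul_le_mul_of_nonneg_right (min_le_right _ _) hB0
    have hlt : ε / (B + 1) * B < ε := by
      rw [div_mul_eq_mul_div, div_lt_iff₀ (by linarith)]
      nlinarith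
    linarith
  -- descent lemma for f
  have hSx : ∀ k, x k ∈ closure (convexHull ℝ (Set.range x)) := fun k =>
    subset_closure (subset_convexHull ℝ _ (Set.mem_range_self k))
  have hmemt : ∀ t : ℝ, t ∈ Set.Icc (0 : ℝ) 1 →
      x m + t • dd ∈ closure (convexHull ℝ (Set.range x)) := by
    intro t ht
    refine subset_closure ?_
    have hmem := (convex_convexHull ℝ (Set.range x))
      (subset_convexHull ℝ _ (Set.mem_range_self m))
      (subset_convexHull ℝ _ (Set.mem_range_self n))
      (a := 1 - t) (b := t) (by linarith [ht.2]) ht.1 (by ring)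
    have heq : x m + t • dd = (1 - t) • x m + t • x n := by rw [hd]; module
    rwa [heq]
  have hderiv : ∀ t : ℝ, HasDerivAt
      (fun s : ℝ => f (x m + s • dd) - s * ⟪f' (x m), dd⟫ - L * ‖dd‖ ^ 2 / 2 * s ^ 2)
      (⟪f' (x m + t • dd), dd⟫ - ⟪f' (x m), dd⟫ - L * ‖dd‖ ^ 2 * t) t := by
    intro t
    have hc : HasDerivAt (fun s : ℝ => x m + s • dd) dd t := by
      simpa using ((hasDerivAt_id t).smul_const dd).const_add (x m)
    have h1 : HasDerivAt (fun s : ℝ => f (x m + s • dd)) (⟪f' (x m + t • dd), dd⟫) t := by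
      have h := ((hf (x m + t • dd)).hasFDerivAt.comp_hasDerivAt t hc)
      simp only [InnerProductSpace.toDual_apply_apply] at h
      exact h
    have h2 : HasDerivAt (fun s : ℝ => s * ⟪f' (x m), dd⟫) (⟪f' (x m), dd⟫) t := by
      simpa using (hasDerivAt_id t).mul_const (⟪f' (x m), dd⟫)
    have h3 : HasDerivAt (fun s : ℝ => L * ‖dd‖ ^ 2 / 2 * s ^ 2) (L * ‖dd‖ ^ 2 * t) t := by
      have := (hasDerivAt_pow 2 t).const_mul (L * ‖dd‖ ^ 2 / 2)
      refine this.congr_deriv ?_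
      ring
    exact (h1.sub h2).sub h3
  have hanti : AntitoneOn
      (fun s : ℝ => f (x m + s • dd) - s * ⟪f' (x m), dd⟫ - L * ‖dd‖ ^ 2 / 2 * s ^ 2)
      (Set.Icc 0 1) := by
    refine antitoneOn_of_deriv_nonpos (convex_Icc 0 1)
      (fun t _ => (hderiv t).continuousAt.continuousWithinAt)
      (fun t _ => (hderiv t).differentiableAt.differentiableWithinAt) ?_
    intro t ht
    rw [interior_Icc] at ht
    rw [(hderiv t).deriv]
    have hmt : x m + t • dd ∈ closure (convexHull ℝ (Set.range x)) :=
      hmemt t ⟨ht.1.le, ht.2.le⟩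
    have hb := hLip _ hmt _ (hSx m)
    have hnn : ‖x m + t • dd - x m‖ = t * ‖dd‖ := by
      rw [add_sub_cancel_left, norm_smul, Real.norm_eq_abs, abs_of_pos ht.1]
    rw [hnn] at hb
    have hinn : ⟪f' (x m + t • dd), dd⟫ - ⟪f' (x m), dd⟫
        = ⟪f' (x m + t • dd) - f' (x m), dd⟫ := (inner_sub_left _ _ _).symm
    rw [hinn]
    have hcs := real_inner_le_norm (f' (x m + t • dd) - f' (x m)) dd
    nlinarith [norm_nonneg dd, norm_nonneg (f' (x m + t • dd) - f' (x m))]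
  have hg10 := hanti (Set.left_mem_Icc.2 zero_le_one) (Set.right_mem_Icc.2 zero_le_one)
    zero_le_one
  have h1d : x m + (1 : ℝ) • dd = x n := by rw [hd]; module
  simp only [one_smul, zero_smul, add_zero, one_pow, mul_one, zero_pow, mul_zero,
    zero_mul, sub_zero, one_pow] at hg10
  rw [show x m + dd = x n from by rw [hd]; abel] at hg10
  have hfdesc : f (x n) ≤ f (x m) + ⟪f' (x m), dd⟫ + L / 2 * ‖dd‖ ^ 2 := by linarith
  -- combine
  have hzz : z n - x n = (z m - x m) + (z n - z m) - dd := by rw [hd]; abel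
  have hinner : ⟪z n - x n, dd⟫ = ⟪z m - x m, dd⟫ + ⟪z n - z m, dd⟫ - ‖dd‖ ^ 2 := by
    rw [hzz, inner_sub_left, inner_add_left, real_inner_self_eq_norm_sq]
  rw [hinner, mul_sub, mul_add] at hphi
  simp only [psiR, Fnor, ← hx m]
  rw [inner_add_left, real_inner_smul_left, one_div]
  have hl : (L / 2 - lam⁻¹) * ‖dd‖ ^ 2 = L / 2 * ‖dd‖ ^ 2 - lam⁻¹ * ‖dd‖ ^ 2 := by ring
  rw [hl]
  linarith
end

section
/- Suppose there is L ≥ 0 such that ‖∇f(u) − ∇f(v)‖ ≤ L‖u − v‖ for all u, v in the closed convex hull of {x^k : k ∈ ℕ}. Then for all natural numbers 0 ≤ m < n, writing τ := τ_{m,n} and e := e^{m,n}: ‖F_nor(z^n)‖² ≤ (1 − τ/λ)²·‖F_nor(z^m)‖² + (L² + 2L/λ + 1/λ²)·‖x^n − x^m‖² + (1/λ²)·‖e‖² + (2/λ)·(1 − τ/λ)·⟨F_nor(z^m), λ(∇f(x^n) − ∇f(x^m)) − (x^n − x^m) + e⟩ + (2/λ)·⟨∇f(x^n) − ∇f(x^m),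 e⟩ − (2/λ²)·⟨e, x^n − x^m⟩. -/
open MeasureTheory Filter Real Set Topology
open scoped ENNReal NNReal

variable {d : ℕ}

local notation "E" => EuclideanSpace ℝ (Fin d)
local notation "⟪" x ", " y "⟫" => @inner ℝ _ _ x y

lemma auxIneq {F : Type*} [NormedAddCommGroup F] [InnerProductSpace ℝ F]
    (B D w emn : F) (lam L c : ℝ) (hlam : 0 < lam) (hL : 0 ≤ L)
    (hD : ‖D‖ ≤ L * ‖w‖) :
    ‖c • B + (D - lam⁻¹ • w + lam⁻¹ • emn)‖ ^ 2 ≤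
      c ^ 2 * ‖B‖ ^ 2 + (L ^ 2 + 2 * L / lam + 1 / lam ^ 2) * ‖w‖ ^ 2
        + (1 / lam ^ 2) * ‖emn‖ ^ 2
        + (2 / lam) * c * ⟪B, lam • D - w + emn⟫
        + (2 / lam) * ⟪D, emn⟫ - (2 / lam ^ 2) * ⟪emn, w⟫ := by
  have hlam0 : lam ≠ 0 := ne_of_gt hlam
  have hr : (0:ℝ) < lam⁻¹ := by positivity
  have h1 : ‖D‖ ^ 2 ≤ L ^ 2 * ‖w‖ ^ 2 := by
    nlinarith [norm_nonneg D, norm_nonneg w]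
  have h2 : -⟪D, w⟫ ≤ L * ‖w‖ ^ 2 := by
    have ha := abs_real_inner_le_norm D w
    have hb := neg_abs_le (⟪D, w⟫)
    nlinarith [norm_nonneg w]
  have key : ‖D‖ ^ 2 - 2 * lam⁻¹ * ⟪D, w⟫ ≤ L ^ 2 * ‖w‖ ^ 2 + 2 * (lam⁻¹ * L) * ‖w‖ ^ 2 := by
    have h3 : lam⁻¹ * (-⟪D, w⟫) ≤ lam⁻¹ * (L * ‖w‖ ^ 2) :=
      mul_le_mul_of_nonneg_left h2 (le_of_lt hr)
    nlinarith [h3]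
  have hBL : ⟪B, lam • D - w + emn⟫ = lam * ⟪B, D⟫ - ⟪B, w⟫ + ⟪B, emn⟫ := by
    simp [inner_add_right, inner_sub_right, real_inner_smul_right]
  have hLHS : ‖c • B + (D - lam⁻¹ • w + lam⁻¹ • emn)‖ ^ 2
      = c ^ 2 * ‖B‖ ^ 2 + ‖D‖ ^ 2 + lam⁻¹ ^ 2 * ‖w‖ ^ 2 + lam⁻¹ ^ 2 * ‖emn‖ ^ 2
        + 2 * c * ⟪B, D⟫ - 2 * lam⁻¹ * c * ⟪B, w⟫ + 2 * lam⁻¹ * c * ⟪B, emn⟫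
        - 2 * lam⁻¹ * ⟪D, w⟫ + 2 * lam⁻¹ * ⟪D, emn⟫ - 2 * lam⁻¹ ^ 2 * ⟪w, emn⟫ := by
    rw [← real_inner_self_eq_norm_sq]
    simp only [inner_add_left, inner_add_right, inner_sub_left, inner_sub_right,
      real_inner_smul_left, real_inner_smul_right]
    rw [real_inner_self_eq_norm_sq B, real_inner_self_eq_norm_sq D,
      real_inner_self_eq_norm_sq w, real_inner_self_eq_norm_sq emn,
      real_inner_comm D B, real_inner_comm w B, real_inner_comm emn B,
      real_inner_comm w D, real_inner_comm emn D, real_inner_comm emn w]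
    ring
  have e1 : 2 / lam = 2 * lam⁻¹ := by rw [div_eq_mul_inv]
  have e2 : 1 / lam ^ 2 = lam⁻¹ ^ 2 := by rw [one_div, inv_pow]
  have e3 : 2 / lam ^ 2 = 2 * lam⁻¹ ^ 2 := by rw [div_eq_mul_inv, inv_pow]
  have e4 : 2 * L / lam = 2 * (lam⁻¹ * L) := by field_simp
  have e5 : 2 * lam⁻¹ * c * (lam * ⟪B, D⟫ - ⟪B, w⟫ + ⟪B, emn⟫)
      = 2 * c * ⟪B, D⟫ - 2 * lam⁻¹ * c * ⟪B, w⟫ + 2 * lam⁻¹ * c * ⟪B, emn⟫ := by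
    field_simp
  have e6 : ⟪emn, w⟫ = ⟪w, emn⟫ := real_inner_comm _ _
  rw [hLHS, e1, e2, e3, e4, hBL, e5, e6]
  linarith [key]

/-- Technical upper bound for the normal map along the trajectory. -/
theorem stmt5
    (f : E → ℝ) (f' : E → E) (φ : E → EReal) (prox : E → E) (lam : ℝ)
    (hlam : 0 < lam)
    (hf : ∀ v : E, HasGradientAt f (f' v) v) (hf'cont : Continuous f')
    (hφconv : ∀ u v : E, ∀ a b : ℝ, 0 ≤ a → 0 ≤ b → a + b = 1 →
      φ (a • u + b • v) ≤ (a : EReal) * φ u + (b : EReal) * φ v)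
    (hφlsc : LowerSemicontinuous φ)
    (hφnebot : ∀ v : E, φ v ≠ ⊥) (hφnetop : ∃ v : E, φ v ≠ ⊤)
    (hprox : ∀ u v : E,
      φ (prox u) + ((‖u - prox u‖ ^ 2 / (2 * lam) : ℝ) : EReal)
        ≤ φ v + ((‖u - v‖ ^ 2 / (2 * lam) : ℝ) : EReal))
    (α : ℕ → ℝ) (hα : ∀ k, 0 < α k)
    (z x gseq e : ℕ → E)
    (hx : ∀ k, x k = prox (z k))
    (hzrec : ∀ k, z (k + 1) = z k - α k • (gseq k + lam⁻¹ • (z k - x k)))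
    (he : ∀ k, e k = gseq k - f' (x k))
    (L : ℝ) (hL : 0 ≤ L)
    (hLip : ∀ u ∈ closure (convexHull ℝ (Set.range x)),
      ∀ v ∈ closure (convexHull ℝ (Set.range x)), ‖f' u - f' v‖ ≤ L * ‖u - v‖)
    (m n : ℕ) (hmn : m < n) :
    ∀ (τ : ℝ) (emn : E),
      τ = ∑ i ∈ Finset.Ico m n, α i →
      emn = z n - z m + τ • Fnor f' prox lam (z m) →
      ‖Fnor f' prox lam (z n)‖ ^ 2 ≤
        (1 - τ / lam) ^ 2 * ‖Fnor f' prox lam (z m)‖ ^ 2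
          + (L ^ 2 + 2 * L / lam + 1 / lam ^ 2) * ‖x n - x m‖ ^ 2
          + (1 / lam ^ 2) * ‖emn‖ ^ 2
          + (2 / lam) * (1 - τ / lam) *
              ⟪Fnor f' prox lam (z m), lam • (f' (x n) - f' (x m)) - (x n - x m) + emn⟫
          + (2 / lam) * ⟪f' (x n) - f' (x m), emn⟫
          - (2 / lam ^ 2) * ⟪emn, x n - x m⟫ := by
  intro τ emn hτ hemn
  have hmem : ∀ k, x k ∈ closure (convexHull ℝ (Set.range x)) :=
    fun k => subset_closure (subset_convexHull ℝ _ (Set.mem_range_self k))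
  have hD : ‖f' (x n) - f' (x m)‖ ≤ L * ‖x n - x m‖ := hLip _ (hmem n) _ (hmem m)
  have hlam0 : lam ≠ 0 := ne_of_gt hlam
  have hBexp : Fnor f' prox lam (z m) = f' (x m) + lam⁻¹ • (z m - x m) := by
    rw [Fnor, ← hx m]
  have hNexp : Fnor f' prox lam (z n) = f' (x n) + lam⁻¹ • (z n - x n) := by
    rw [Fnor, ← hx n]
  have hz : z n = z m - τ • Fnor f' prox lam (z m) + emn := by rw [hemn]; abel
  have key : Fnor f' prox lam (z n)
      = (1 - τ / lam) • Fnor f' prox lam (z m)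
        + ((f' (x n) - f' (x m)) - lam⁻¹ • (x n - x m) + lam⁻¹ • emn) := by
    rw [hNexp, hz, hBexp]
    match_scalars <;> field_simp <;> ring
  rw [key]
  exact auxIneq _ _ _ _ lam L _ hlam hL hD
end

section
/- (Approximate descent property.) Suppose there is L ≥ 0 such that ‖∇f(u) − ∇f(v)‖ ≤ L‖u − v‖ for all u, v in the closed convex hull of {x^k : k ∈ ℕ}, and set ξ := 1/(2 + 2λ²L²). Then there exists T̄ > 0, depending only on L and λ, with the following property: for every T ∈ (0, T̄], every K₀ ∈ ℕ, and every strictly increasing sequence {m_k} ⊂ ℕ satisfying (4/5)·T ≤ τ_{m_k, m_{k+1}} ≤ T for all k ≥ K₀, one has H_ξ(z^{m_{k+1}}) − H_ξ(z^{m_k}) ≤ −(ξT/5)·‖F_nor(z^{m_k})‖² + (5/T)·s_{m_k, m_{k+1}}² for all k ≥ K₀. -/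
open MeasureTheory Filter Real Set Topology
open scoped ENNReal NNReal

variable {d : ℕ}

local notation "E" => EuclideanSpace ℝ (Fin d)
local notation "⟪" x ", " y "⟫" => @inner ℝ _ _ x y

lemma young_aux (p x y : ℝ) (hp : 0 < p) : x * y ≤ p * x ^ 2 + y ^ 2 / (4 * p) := by
  rw [← sub_nonneg]
  have h : p * x ^ 2 + y ^ 2 / (4 * p) - x * y = (2 * p * x - y) ^ 2 / (4 * p) := by
    field_simp; ring
  rw [h]; positivity

lemma descent_lemma {H : Type*} [NormedAddCommGroup H] [InnerProductSpace ℝ H] [CompleteSpace H]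
    (f : H → ℝ) (f' : H → H) (hf : ∀ v, HasGradientAt f (f' v) v)
    (K : Set H) (hK : Convex ℝ K) (L : ℝ) (hL : 0 ≤ L)
    (hLip : ∀ u ∈ K, ∀ v ∈ K, ‖f' u - f' v‖ ≤ L * ‖u - v‖)
    (a b : H) (ha : a ∈ K) (hb : b ∈ K) :
    f b ≤ f a + ⟪f' a, b - a⟫ + L / 2 * ‖b - a‖ ^ 2 := by
  set c : ℝ → H := fun t => a + t • (b - a) with hc
  have hcmem : ∀ t ∈ Icc (0:ℝ) 1, c t ∈ K := by
    intro t ht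
    have := hK ha hb (by linarith [ht.2] : (0:ℝ) ≤ 1 - t) ht.1 (by ring)
    convert this using 1
    simp [hc]
    module
  have hcd : ∀ t : ℝ, HasDerivAt c (b - a) t := by
    intro t
    simpa [hc] using ((hasDerivAt_id t).smul_const (b - a)).const_add a
  have hfc : ∀ t : ℝ, HasDerivAt (fun t => f (c t)) ⟪f' (c t), b - a⟫ t := by
    intro t
    have h1 : HasFDerivAt f (InnerProductSpace.toDual ℝ H (f' (c t))) (c t) := hf (c t)
    have := h1.comp_hasDerivAt t (hcd t)
    exact this
  set I := ⟪f' a, b - a⟫ with hI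
  set N := ‖b - a‖ ^ 2 with hN
  set g : ℝ → ℝ := fun t => f (c t) - t * I - L / 2 * N * t ^ 2 with hg
  have hgd : ∀ t : ℝ, HasDerivAt g (⟪f' (c t), b - a⟫ - I - L / 2 * N * (2 * t)) t := by
    intro t
    exact ((hfc t).sub (by simpa using (hasDerivAt_id t).mul_const I)).sub
      (by simpa using (hasDerivAt_pow 2 t).const_mul (L / 2 * N))
  have hanti : AntitoneOn g (Icc 0 1) := by
    apply antitoneOn_of_deriv_nonpos (convex_Icc 0 1)
    · exact fun t _ => ((hgd t).continuousAt).continuousWithinAt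
    · intro t ht
      exact ((hgd t).differentiableAt).differentiableWithinAt
    · intro t ht
      rw [interior_Icc] at ht
      rw [(hgd t).deriv]
      have hct : c t ∈ K := hcmem t ⟨le_of_lt ht.1, le_of_lt ht.2⟩
      have h2 : ⟪f' (c t), b - a⟫ - I = ⟪f' (c t) - f' a, b - a⟫ := by
        rw [inner_sub_left]
      have h3 : ⟪f' (c t) - f' a, b - a⟫ ≤ ‖f' (c t) - f' a‖ * ‖b - a‖ :=
        real_inner_le_norm _ _
      have h4 : ‖f' (c t) - f' a‖ ≤ L * ‖c t - a‖ := hLip _ hct _ ha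
      have h5 : ‖c t - a‖ = t * ‖b - a‖ := by
        simp [hc, norm_smul, abs_of_pos ht.1]
      have h6 : ‖f' (c t) - f' a‖ * ‖b - a‖ ≤ L * t * N := by
        rw [hN]
        calc ‖f' (c t) - f' a‖ * ‖b - a‖ ≤ (L * ‖c t - a‖) * ‖b - a‖ := by
              apply mul_le_mul_of_nonneg_right h4 (norm_nonneg _)
          _ = L * t * ‖b - a‖ ^ 2 := by rw [h5]; ring
      nlinarith [h3, h6]
  have h01 : g 1 ≤ g 0 := hanti (by norm_num) (by norm_num) (by norm_num)
  have hg0 : g 0 = f a := by simp [hg, hc]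
  have hg1 : g 1 = f b - I - L / 2 * N := by simp [hg, hc]
  rw [hg0, hg1] at h01
  linarith


section ProxLemmas

variable {H : Type*} [NormedAddCommGroup H] [InnerProductSpace ℝ H]
variable (φ : H → EReal) (prox : H → H) (lam : ℝ)

lemma prox_finite (hlam : 0 < lam)
    (hφnebot : ∀ v : H, φ v ≠ ⊥) (hφnetop : ∃ v : H, φ v ≠ ⊤)
    (hprox : ∀ u v : H,
      φ (prox u) + ((‖u - prox u‖ ^ 2 / (2 * lam) : ℝ) : EReal)
        ≤ φ v + ((‖u - v‖ ^ 2 / (2 * lam) : ℝ) : EReal)) (u : H) :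
    φ (prox u) ≠ ⊤ := by
  obtain ⟨v₀, hv₀⟩ := hφnetop
  intro htop
  have h := hprox u v₀
  rw [htop] at h
  have h1 : (⊤ : EReal) + ((‖u - prox u‖ ^ 2 / (2 * lam) : ℝ) : EReal) = ⊤ := by simp
  rw [h1, top_le_iff] at h
  exact (EReal.add_lt_top hv₀ (EReal.coe_ne_top _)).ne h

lemma prox_real (hlam : 0 < lam)
    (hφnebot : ∀ v : H, φ v ≠ ⊥) (hφnetop : ∃ v : H, φ v ≠ ⊤)
    (hprox : ∀ u v : H,
      φ (prox u) + ((‖u - prox u‖ ^ 2 / (2 * lam) : ℝ) : EReal)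
        ≤ φ v + ((‖u - v‖ ^ 2 / (2 * lam) : ℝ) : EReal))
    (u v : H) (hv : φ v ≠ ⊤) :
    (φ (prox u)).toReal + ‖u - prox u‖ ^ 2 / (2 * lam)
      ≤ (φ v).toReal + ‖u - v‖ ^ 2 / (2 * lam) := by
  have h := hprox u v
  have h1 : φ (prox u) = (((φ (prox u)).toReal : ℝ) : EReal) :=
    (EReal.coe_toReal (prox_finite φ prox lam hlam hφnebot hφnetop hprox u) (hφnebot _)).symm
  have h2 : φ v = (((φ v).toReal : ℝ) : EReal) := (EReal.coe_toReal hv (hφnebot _)).symm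
  rw [h1, h2, ← EReal.coe_add, ← EReal.coe_add, EReal.coe_le_coe_iff] at h
  exact h

lemma prox_subgrad (hlam : 0 < lam)
    (hφconv : ∀ u v : H, ∀ a b : ℝ, 0 ≤ a → 0 ≤ b → a + b = 1 →
      φ (a • u + b • v) ≤ (a : EReal) * φ u + (b : EReal) * φ v)
    (hφnebot : ∀ v : H, φ v ≠ ⊥) (hφnetop : ∃ v : H, φ v ≠ ⊤)
    (hprox : ∀ u v : H,
      φ (prox u) + ((‖u - prox u‖ ^ 2 / (2 * lam) : ℝ) : EReal)
        ≤ φ v + ((‖u - v‖ ^ 2 / (2 * lam) : ℝ) : EReal))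
    (u v : H) :
    (φ (prox u)).toReal - (φ (prox v)).toReal
      ≤ -⟪u - prox u, prox v - prox u⟫ / lam := by
  have hfin : ∀ w : H, φ (prox w) ≠ ⊤ :=
    prox_finite φ prox lam hlam hφnebot hφnetop hprox
  set pu := prox u with hpu
  set pv := prox v with hpv
  set ru := (φ pu).toReal with hru
  set rv := (φ pv).toReal with hrv
  set ip := (⟪u - pu, pv - pu⟫ : ℝ) with hip
  set n2 := ‖pv - pu‖ ^ 2 with hn2
  have hn2nn : 0 ≤ n2 := sq_nonneg _
  have hl2 : (0:ℝ) < 2 * lam := by linarith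
  have key : ∀ t : ℝ, 0 < t → t ≤ 1 →
      ru - rv ≤ (-2 * ip + t * n2) / (2 * lam) := by
    intro t ht0 ht1
    set q := pu + t • (pv - pu) with hq
    have hqe : q = (1 - t) • pu + t • pv := by rw [hq]; module
    have hcu : φ pu = ((ru : ℝ) : EReal) := (EReal.coe_toReal (hfin u) (hφnebot _)).symm
    have hcv : φ pv = ((rv : ℝ) : EReal) := (EReal.coe_toReal (hfin v) (hφnebot _)).symm
    have hconv : φ q ≤ (((1 - t) * ru + t * rv : ℝ) : EReal) := by
      rw [hqe]
      calc φ ((1 - t) • pu + t • pv)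
          ≤ ((1 - t : ℝ) : EReal) * φ pu + ((t : ℝ) : EReal) * φ pv :=
            hφconv pu pv (1 - t) t (by linarith) (le_of_lt ht0) (by ring)
        _ = (((1 - t) * ru + t * rv : ℝ) : EReal) := by
            rw [hcu, hcv, ← EReal.coe_mul, ← EReal.coe_mul, ← EReal.coe_add]
    have hqnetop : φ q ≠ ⊤ := by
      intro h; rw [h] at hconv; exact (EReal.coe_ne_top _) (top_le_iff.mp hconv)
    have hqreal : (φ q).toReal ≤ (1 - t) * ru + t * rv :=
      EReal.toReal_le_toReal hconv (hφnebot _) (EReal.coe_ne_top _)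
    have h1 := prox_real φ prox lam hlam hφnebot hφnetop hprox u q hqnetop
    have hnorm : ‖u - q‖ ^ 2 = ‖u - pu‖ ^ 2 - 2 * t * ip + t ^ 2 * n2 := by
      have he : u - q = (u - pu) - t • (pv - pu) := by rw [hq]; abel
      rw [he, norm_sub_sq_real, real_inner_smul_right, norm_smul, mul_pow,
        Real.norm_eq_abs, sq_abs, ← hip, ← hn2]
      ring
    rw [hnorm] at h1
    have h2 : ru + ‖u - pu‖ ^ 2 / (2 * lam)
        ≤ (1 - t) * ru + t * rv + (‖u - pu‖ ^ 2 - 2 * t * ip + t ^ 2 * n2) / (2 * lam) :=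
      le_trans h1 (by linarith [hqreal])
    have h3 : t * ru - t * rv
        ≤ ((‖u - pu‖ ^ 2 - 2 * t * ip + t ^ 2 * n2) - ‖u - pu‖ ^ 2) / (2 * lam) := by
      rw [sub_div]; linarith
    have h4 : (‖u - pu‖ ^ 2 - 2 * t * ip + t ^ 2 * n2) - ‖u - pu‖ ^ 2
        = t * (-2 * ip + t * n2) := by ring
    rw [h4, mul_div_assoc] at h3
    have h5 : t * (ru - rv) ≤ t * ((-2 * ip + t * n2) / (2 * lam)) := by
      rw [mul_sub]; exact h3
    exact (mul_le_mul_iff_right₀ ht0).mp h5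
  by_contra hcon
  push_neg at hcon
  have he0 : -ip / lam = (-2 * ip) / (2 * lam) := by
    field_simp
  rw [he0] at hcon
  set δ := ru - rv - (-2 * ip) / (2 * lam) with hδ
  have hδpos : 0 < δ := by rw [hδ]; linarith
  set t := min 1 (δ * lam / (n2 + 1)) with ht
  have htpos : 0 < t := lt_min one_pos (by positivity)
  have h3 := key t htpos (min_le_left _ _)
  have h5 : t * n2 / (2 * lam) ≤ δ / 2 := by
    rw [div_le_iff₀ hl2]
    have h6 : t * n2 ≤ (δ * lam / (n2 + 1)) * n2 :=
      mul_le_mul_of_nonneg_right (min_le_right _ _) hn2nn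
    have h7 : (δ * lam / (n2 + 1)) * n2 ≤ δ * lam := by
      rw [div_mul_eq_mul_div, div_le_iff₀ (by positivity)]
      nlinarith [mul_pos hδpos hlam]
    nlinarith
  have h8 : (-2 * ip + t * n2) / (2 * lam) = (-2 * ip) / (2 * lam) + t * n2 / (2 * lam) := by
    ring
  rw [h8] at h3
  linarith

lemma prox_firm (hlam : 0 < lam)
    (hφconv : ∀ u v : H, ∀ a b : ℝ, 0 ≤ a → 0 ≤ b → a + b = 1 →
      φ (a • u + b • v) ≤ (a : EReal) * φ u + (b : EReal) * φ v)
    (hφnebot : ∀ v : H, φ v ≠ ⊥) (hφnetop : ∃ v : H, φ v ≠ ⊤)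
    (hprox : ∀ u v : H,
      φ (prox u) + ((‖u - prox u‖ ^ 2 / (2 * lam) : ℝ) : EReal)
        ≤ φ v + ((‖u - v‖ ^ 2 / (2 * lam) : ℝ) : EReal))
    (u v : H) :
    ‖prox u - prox v‖ ^ 2 ≤ ⟪u - v, prox u - prox v⟫ := by
  have h1 := prox_subgrad φ prox lam hlam hφconv hφnebot hφnetop hprox u v
  have h2 := prox_subgrad φ prox lam hlam hφconv hφnebot hφnetop hprox v u
  have h3 : 0 ≤ -⟪u - prox u, prox v - prox u⟫ / lam + -⟪v - prox v, prox u - prox v⟫ / lam := by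
    linarith
  have h4 : 0 ≤ -⟪u - prox u, prox v - prox u⟫ + -⟪v - prox v, prox u - prox v⟫ := by
    by_contra hc
    push_neg at hc
    have : (-⟪u - prox u, prox v - prox u⟫ + -⟪v - prox v, prox u - prox v⟫) / lam < 0 :=
      div_neg_of_neg_of_pos hc hlam
    rw [add_div] at this
    linarith
  have h5 : -⟪u - prox u, prox v - prox u⟫ = ⟪u - prox u, prox u - prox v⟫ := by
    rw [← inner_neg_right]; congr 1; abel
  have h6 : ⟪u - v, prox u - prox v⟫ - ‖prox u - prox v‖ ^ 2
      = ⟪u - prox u, prox u - prox v⟫ + -⟪v - prox v, prox u - prox v⟫ := by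
    rw [← real_inner_self_eq_norm_sq, ← inner_neg_left, ← inner_add_left, ← inner_sub_left]
    congr 1
    abel
  linarith [h6 ▸ (h5 ▸ h4)]

lemma prox_lip (hlam : 0 < lam)
    (hφconv : ∀ u v : H, ∀ a b : ℝ, 0 ≤ a → 0 ≤ b → a + b = 1 →
      φ (a • u + b • v) ≤ (a : EReal) * φ u + (b : EReal) * φ v)
    (hφnebot : ∀ v : H, φ v ≠ ⊥) (hφnetop : ∃ v : H, φ v ≠ ⊤)
    (hprox : ∀ u v : H,
      φ (prox u) + ((‖u - prox u‖ ^ 2 / (2 * lam) : ℝ) : EReal)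
        ≤ φ v + ((‖u - v‖ ^ 2 / (2 * lam) : ℝ) : EReal))
    (u v : H) :
    ‖prox u - prox v‖ ≤ ‖u - v‖ := by
  have h1 := prox_firm φ prox lam hlam hφconv hφnebot hφnetop hprox u v
  have h2 : (⟪u - v, prox u - prox v⟫:ℝ) ≤ ‖u - v‖ * ‖prox u - prox v‖ := real_inner_le_norm _ _
  rcases eq_or_lt_of_le (norm_nonneg (prox u - prox v)) with h | h
  · rw [← h]; exact norm_nonneg _
  · have := le_trans h1 h2
    rw [pow_two] at this
    exact le_of_mul_le_mul_right (by linarith) h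
end ProxLemmas

set_option maxHeartbeats 1000000 in
lemma scalar_final (ξ μ T τ a V S β C2 C3 : ℝ)
    (hT : 0 < T) (hτ1 : 4/5*T ≤ τ) (hτ2 : τ ≤ T)
    (ha : 0 ≤ a) (hV : 0 ≤ V) (hS : 0 ≤ S) (hμ : 0 ≤ μ) (hβ : 0 ≤ β)
    (hξpos : 0 < ξ) (hξhalf : ξ ≤ 1/2) (hξeq : 2*ξ*μ^2 = 1 - 2*ξ)
    (hC2 : 0 ≤ C2) (hC3 : 0 ≤ C3)
    (hc1 : β ≤ ξ/20) (hc2 : C3*T ≤ ξ/40) (hc4 : C2*T ≤ 1/8) :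
    (1-ξ)/τ*(-V^2 + V*(β*(T*a+S)+S)) + C3*(T*a+S)^2 + C2*V^2 + ξ*μ*(a*V)
      + ξ*(-(τ*a^2) + a*(β*(T*a+S)+S)) ≤ -(ξ*T/5)*a^2 + 5/T*S^2 := by
  have hτpos : 0 < τ := lt_of_lt_of_le (by linarith) hτ1
  have h1ξ : 0 < 1 - ξ := by linarith
  have hAnn : 0 ≤ T*a+S := by positivity
  have hynn : 0 ≤ β*(T*a+S)+S := by positivity
  -- small scalar facts first (linear-arithmetic friendly)
  have hξS : ξ*S^2 ≤ 1/2*S^2 := mul_le_mul_of_nonneg_right hξhalf (sq_nonneg S)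
  have hξV : ξ*V^2 ≤ 1/2*V^2 := mul_le_mul_of_nonneg_right hξhalf (sq_nonneg V)
  have hξP : ξ*(T^2*a^2) ≤ 1/2*(T^2*a^2) := mul_le_mul_of_nonneg_right hξhalf (by positivity)
  have k1 : T*(ξ*μ*(a*V)) ≤ (1-ξ)/2*V^2 + ξ/4*(T^2*a^2) := by
    have k1a : 2*(1-ξ)*(T*(ξ*μ*(a*V))) ≤ (1-ξ)^2*V^2 + ξ^2*μ^2*(T^2*a^2) := by
      linarith [sq_nonneg ((1-ξ)*V - ξ*μ*(T*a)), sq_nonneg ((1-ξ)*V), sq_nonneg (ξ*μ*(T*a))]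
    have k1b : ξ^2*μ^2 = ξ/2*(1-2*ξ) := by rw [← hξeq]; ring
    have k1c : ξ^2*μ^2*(T^2*a^2) ≤ (1-ξ)*(ξ/2)*(T^2*a^2) := by
      rw [k1b]
      have h : ξ/2*(1-2*ξ) ≤ (1-ξ)*(ξ/2) := by linarith [sq_nonneg ξ]
      exact mul_le_mul_of_nonneg_right h (by positivity)
    have k1d : 2*(1-ξ)*(T*(ξ*μ*(a*V))) ≤ 2*(1-ξ)*((1-ξ)/2*V^2 + ξ/4*(T^2*a^2)) := by
      have e : 2*(1-ξ)*((1-ξ)/2*V^2 + ξ/4*(T^2*a^2))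
          = (1-ξ)^2*V^2 + (1-ξ)*(ξ/2)*(T^2*a^2) := by ring
      rw [e]
      linarith [k1a, k1c]
    exact le_of_mul_le_mul_left k1d (by linarith : (0:ℝ) < 2*(1-ξ))
  have k2 : T*(ξ*(a*S)) ≤ ξ/8*(T^2*a^2) + 2*ξ*S^2 := by
    linarith [mul_nonneg hξpos.le (sq_nonneg (T*a - 4*S))]
  have hTaS : (0:ℝ) ≤ T*a*S := by positivity
  have hTaS2 : T*a*S ≤ (T^2*a^2)/2 + S^2/2 := by linarith [sq_nonneg (T*a - S)]
  have hξβ : ξ*β ≤ ξ/40 := by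
    linarith [mul_le_mul_of_nonneg_left hc1 hξpos.le,
      mul_le_mul_of_nonneg_left hξhalf hξpos.le]
  have k3 : T*(ξ*(a*(β*(T*a+S)))) ≤ 3/80*ξ*(T^2*a^2) + 1/160*S^2 := by
    have e : T*(ξ*(a*(β*(T*a+S)))) = (ξ*β)*(T^2*a^2) + (ξ*β)*(T*a*S) := by ring
    have b1 : (ξ*β)*(T^2*a^2) ≤ (ξ/40)*(T^2*a^2) :=
      mul_le_mul_of_nonneg_right hξβ (by positivity)
    have b2 : (ξ*β)*(T*a*S) ≤ (ξ/40)*(T*a*S) := mul_le_mul_of_nonneg_right hξβ hTaS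
    have b3 : (ξ/40)*(T*a*S) ≤ (ξ/40)*((T^2*a^2)/2 + S^2/2) :=
      mul_le_mul_of_nonneg_left hTaS2 (by positivity)
    rw [e]
    linarith [b1, b2, b3, hξS]
  have hA2 : (T*a+S)^2 ≤ 2*(T^2*a^2) + 2*S^2 := by linarith [sq_nonneg (T*a - S)]
  have k4 : T*(C3*(T*a+S)^2) ≤ ξ/20*(T^2*a^2) + 1/40*S^2 := by
    have b1 : T*(C3*(T*a+S)^2) = (C3*T)*(T*a+S)^2 := by ring
    have b2 : (C3*T)*(T*a+S)^2 ≤ (ξ/40)*(T*a+S)^2 :=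
      mul_le_mul_of_nonneg_right hc2 (sq_nonneg _)
    have b3 : (ξ/40)*(T*a+S)^2 ≤ (ξ/40)*(2*(T^2*a^2) + 2*S^2) :=
      mul_le_mul_of_nonneg_left hA2 (by positivity)
    rw [b1]
    linarith [b2, b3, hξS]
  have k5 : T*(C2*V^2) ≤ 1/8*V^2 := by
    have b1 : T*(C2*V^2) = (C2*T)*V^2 := by ring
    rw [b1]
    exact le_trans (mul_le_mul_of_nonneg_right hc4 (sq_nonneg V)) (by linarith [sq_nonneg V])
  have k6 : T*(ξ*(-(τ*a^2))) ≤ -(4/5)*ξ*(T^2*a^2) := by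
    have h0 : (0:ℝ) ≤ ξ*T*a^2 := by positivity
    linarith [mul_le_mul_of_nonneg_left hτ1 h0]
  have k7 : (5/4)*(2*β^2*(T*a+S)^2 + 2*S^2) ≤ ξ/80*(T^2*a^2) + (5/2 + 1/160)*S^2 := by
    have hβ4 : 5*β^2 ≤ ξ/160 := by
      have h1 : β*β ≤ (ξ/20)*(ξ/20) := mul_self_le_mul_self hβ hc1
      have h2 : ξ*ξ ≤ ξ*(1/2) := mul_le_mul_of_nonneg_left hξhalf hξpos.le
      nlinarith [h1, h2]
    have b2 : (5*β^2)*((T*a+S)^2) ≤ (ξ/160)*((T*a+S)^2) :=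
      mul_le_mul_of_nonneg_right hβ4 (sq_nonneg _)
    have b3 : (ξ/160)*((T*a+S)^2) ≤ (ξ/160)*(2*(T^2*a^2) + 2*S^2) :=
      mul_le_mul_of_nonneg_left hA2 (by positivity)
    have b7 : (5/4)*(2*β^2*(T*a+S)^2 + 2*S^2) = (5*β^2)*((T*a+S)^2)/2 + (5/2)*S^2 := by ring
    rw [b7]
    have hPnn : (0:ℝ) ≤ ξ*(T^2*a^2) := by positivity
    linarith [b2, b3, hξS, hPnn]
  have hV2ξ : -(3/4)*((1-ξ)*V^2) + (1-ξ)/2*V^2 + 1/8*V^2 ≤ 0 := by linarith [hξV]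
  have hQξ : 2*ξ*S^2 ≤ S^2 := by linarith [hξS]
  -- bound the 1/τ term by an expression over T
  have hY1 : V*(β*(T*a+S)+S) ≤ V^2/4 + (β*(T*a+S)+S)^2 := by
    linarith [sq_nonneg (V/2 - (β*(T*a+S)+S))]
  have hy2 : (β*(T*a+S)+S)^2 ≤ 2*β^2*(T*a+S)^2 + 2*S^2 := by
    linarith [sq_nonneg (β*(T*a+S) - S)]
  have hc0 : (0:ℝ) ≤ (1-ξ)/τ := by positivity
  have hc' : (1-ξ)/τ ≤ 5/(4*T) := by
    rw [div_le_div_iff₀ hτpos (by positivity)]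
    have : (0:ℝ) ≤ ξ*(4*T) := by positivity
    nlinarith [this]
  have hcl : (1-ξ)/T ≤ (1-ξ)/τ := div_le_div_of_nonneg_left h1ξ.le hτpos hτ2
  have hX1 : (1-ξ)/τ*(-V^2 + V*(β*(T*a+S)+S))
      ≤ (-(3/4)*((1-ξ)*V^2) + (5/4)*(2*β^2*(T*a+S)^2 + 2*S^2))/T := by
    have hm : (1-ξ)/τ*(-V^2 + V*(β*(T*a+S)+S))
        ≤ (1-ξ)/τ*(-(3/4)*V^2 + (β*(T*a+S)+S)^2) :=
      mul_le_mul_of_nonneg_left (by linarith) hc0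
    have hp1 : (1-ξ)/τ*((β*(T*a+S)+S)^2) ≤ 5/(4*T)*((β*(T*a+S)+S)^2) :=
      mul_le_mul_of_nonneg_right hc' (sq_nonneg _)
    have hp2 : 5/(4*T)*((β*(T*a+S)+S)^2) ≤ 5/(4*T)*(2*β^2*(T*a+S)^2 + 2*S^2) :=
      mul_le_mul_of_nonneg_left hy2 (by positivity)
    have hn1 : (1-ξ)/T*((3/4)*V^2) ≤ (1-ξ)/τ*((3/4)*V^2) :=
      mul_le_mul_of_nonneg_right hcl (by positivity)
    have he : (-(3/4)*((1-ξ)*V^2) + (5/4)*(2*β^2*(T*a+S)^2 + 2*S^2))/T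
        = -((1-ξ)/T*((3/4)*V^2)) + 5/(4*T)*(2*β^2*(T*a+S)^2 + 2*S^2) := by
      field_simp
    have he2 : (1-ξ)/τ*(-(3/4)*V^2 + (β*(T*a+S)+S)^2)
        = -((1-ξ)/τ*((3/4)*V^2)) + (1-ξ)/τ*((β*(T*a+S)+S)^2) := by ring
    rw [he]
    rw [he2] at hm
    linarith
  -- the key polynomial inequality
  have key : (-(3/4)*((1-ξ)*V^2) + (5/4)*(2*β^2*(T*a+S)^2 + 2*S^2))
      + T * (C3*(T*a+S)^2 + C2*V^2 + ξ*μ*(a*V) + ξ*(-(τ*a^2) + a*(β*(T*a+S)+S)))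
      ≤ -(1/5)*ξ*(T^2*a^2) + 5*S^2 := by
    have expand : T * (C3*(T*a+S)^2 + C2*V^2 + ξ*μ*(a*V) + ξ*(-(τ*a^2) + a*(β*(T*a+S)+S)))
        = T*(C3*(T*a+S)^2) + T*(C2*V^2) + T*(ξ*μ*(a*V)) + T*(ξ*(-(τ*a^2)))
          + T*(ξ*(a*(β*(T*a+S)))) + T*(ξ*(a*S)) := by ring
    rw [expand]
    have hPnn2 : (0:ℝ) ≤ ξ*(T^2*a^2) := by positivity
    linarith [k1, k2, k3, k4, k5, k6, k7, hV2ξ, hQξ, hPnn2, sq_nonneg S]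
  -- divide by T and conclude
  have goalsplit : (1-ξ)/τ*(-V^2 + V*(β*(T*a+S)+S)) + C3*(T*a+S)^2 + C2*V^2 + ξ*μ*(a*V)
      + ξ*(-(τ*a^2) + a*(β*(T*a+S)+S))
      ≤ (-(3/4)*((1-ξ)*V^2) + (5/4)*(2*β^2*(T*a+S)^2 + 2*S^2))/T
        + (C3*(T*a+S)^2 + C2*V^2 + ξ*μ*(a*V) + ξ*(-(τ*a^2) + a*(β*(T*a+S)+S))) := by
    linarith [hX1]
  have step2 : (-(3/4)*((1-ξ)*V^2) + (5/4)*(2*β^2*(T*a+S)^2 + 2*S^2))/T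
      + (C3*(T*a+S)^2 + C2*V^2 + ξ*μ*(a*V) + ξ*(-(τ*a^2) + a*(β*(T*a+S)+S)))
      = ((-(3/4)*((1-ξ)*V^2) + (5/4)*(2*β^2*(T*a+S)^2 + 2*S^2))
          + T * (C3*(T*a+S)^2 + C2*V^2 + ξ*μ*(a*V) + ξ*(-(τ*a^2) + a*(β*(T*a+S)+S))))/T := by
    field_simp
  have step3 := (div_le_div_iff_of_pos_right hT).mpr key
  have step4 : (-(1/5)*ξ*(T^2*a^2) + 5*S^2)/T = -(ξ*T/5)*a^2 + 5/T*S^2 := by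
    field_simp
  calc _ ≤ _ := goalsplit
    _ = _ := step2
    _ ≤ (-(1/5)*ξ*(T^2*a^2) + 5*S^2)/T := step3
    _ = _ := step4
-- main theorem body (to be appended after defs)
set_option maxHeartbeats 2000000 in
/-- Approximate descent property for the merit function over time windows. -/
theorem stmt6
    (f : E → ℝ) (f' : E → E) (φ : E → EReal) (prox : E → E) (lam : ℝ)
    (hlam : 0 < lam)
    (hf : ∀ v : E, HasGradientAt f (f' v) v) (hf'cont : Continuous f')
    (hφconv : ∀ u v : E, ∀ a b : ℝ, 0 ≤ a → 0 ≤ b → a + b = 1 →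
      φ (a • u + b • v) ≤ (a : EReal) * φ u + (b : EReal) * φ v)
    (hφlsc : LowerSemicontinuous φ)
    (hφnebot : ∀ v : E, φ v ≠ ⊥) (hφnetop : ∃ v : E, φ v ≠ ⊤)
    (hprox : ∀ u v : E,
      φ (prox u) + ((‖u - prox u‖ ^ 2 / (2 * lam) : ℝ) : EReal)
        ≤ φ v + ((‖u - v‖ ^ 2 / (2 * lam) : ℝ) : EReal))
    (α : ℕ → ℝ) (hα : ∀ k, 0 < α k)
    (z x gseq e : ℕ → E)
    (hx : ∀ k, x k = prox (z k))
    (hzrec : ∀ k, z (k + 1) = z k - α k • (gseq k + lam⁻¹ • (z k - x k)))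
    (he : ∀ k, e k = gseq k - f' (x k))
    (L : ℝ) (hL : 0 ≤ L)
    (hLip : ∀ u ∈ closure (convexHull ℝ (Set.range x)),
      ∀ v ∈ closure (convexHull ℝ (Set.range x)), ‖f' u - f' v‖ ≤ L * ‖u - v‖)
    (ξ : ℝ) (hξ : ξ = 1 / (2 + 2 * lam ^ 2 * L ^ 2)) :
    ∃ Tb > (0 : ℝ), ∀ T : ℝ, 0 < T → T ≤ Tb → ∀ K₀ : ℕ, ∀ m : ℕ → ℕ, ∀ hm : StrictMono m,
      (∀ k ≥ K₀, 4 / 5 * T ≤ ∑ i ∈ Finset.Ico (m k) (m (k + 1)), α i ∧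
        ∑ i ∈ Finset.Ico (m k) (m (k + 1)), α i ≤ T) →
      ∀ k ≥ K₀,
        Hmer f φ f' prox lam ξ (z (m (k + 1))) - Hmer f φ f' prox lam ξ (z (m k)) ≤
          -(ξ * T / 5) * ‖Fnor f' prox lam (z (m k))‖ ^ 2 +
            (5 / T) *
              ((Finset.Icc (m k + 1) (m (k + 1))).sup'
                  (Finset.nonempty_Icc.mpr (hm (Nat.lt_succ_self k)))
                  (fun j => ‖∑ i ∈ Finset.Ico (m k) j, α i • e i‖)) ^ 2 := by
  classical
  have hlamne : lam ≠ 0 := ne_of_gt hlam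
  have hfin : ∀ w : E, φ (prox w) ≠ ⊤ := prox_finite φ prox lam hlam hφnebot hφnetop hprox
  have hKconv : Convex ℝ (closure (convexHull ℝ (Set.range x))) :=
    (convex_convexHull ℝ _).closure
  have hxK : ∀ i : ℕ, x i ∈ closure (convexHull ℝ (Set.range x)) := fun i =>
    subset_closure (subset_convexHull ℝ _ ⟨i, rfl⟩)
  have hden : (0:ℝ) < 2 + 2*lam^2*L^2 := by positivity
  have hξpos : 0 < ξ := by rw [hξ]; positivity
  have hξhalf : ξ ≤ 1/2 := by
    rw [hξ, div_le_iff₀ hden]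
    nlinarith [sq_nonneg (lam*L)]
  have hξeq : 2*ξ*(lam*L)^2 = 1 - 2*ξ := by
    rw [hξ]; field_simp; ring
  have h2lam : (0:ℝ) < 2/lam := by positivity
  set LF := L + 2/lam with hLFdef
  clear_value LF
  have hLFpos : 0 < LF := by rw [hLFdef]; linarith
  set C2 := 3*L/2 + 1/(2*lam) with hC2def
  clear_value C2
  have hC2pos : 0 < C2 := by
    have : (0:ℝ) < 1/(2*lam) := by positivity
    rw [hC2def]; linarith
  set C3 := 4*LF + 2*ξ*lam*LF^2 with hC3def
  clear_value C3
  have hC3pos : 0 < C3 := by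
    have h1 : 0 < 2*ξ*lam*LF^2 := by
      have := mul_pos (mul_pos (mul_pos two_pos hξpos) hlam) (pow_pos hLFpos 2)
      linarith [this]
    rw [hC3def]; linarith
  refine ⟨min (ξ/(40*LF)) (min (ξ/(40*C3)) (1/(8*C2))), ?_, ?_⟩
  · exact lt_min (by positivity) (lt_min (by positivity) (by positivity))
  intro T hT0 hTble K₀ m hm hwin k hk
  have hTc1 : 2*LF*T ≤ ξ/20 := by
    have h := le_trans hTble (min_le_left _ _)
    rw [le_div_iff₀ (by linarith : (0:ℝ) < 40*LF)] at h
    linarith only [h]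
  have hTc2 : C3*T ≤ ξ/40 := by
    have h := le_trans hTble (le_trans (min_le_right _ _) (min_le_left _ _))
    rw [le_div_iff₀ (by linarith : (0:ℝ) < 40*C3)] at h
    linarith only [h]
  have hTc4 : C2*T ≤ 1/8 := by
    have h := le_trans hTble (le_trans (min_le_right _ _) (min_le_right _ _))
    rw [le_div_iff₀ (by linarith : (0:ℝ) < 8*C2)] at h
    linarith only [h]
  obtain ⟨hτ1, hτ2⟩ := hwin k hk
  have hMn : m k < m (k+1) := hm (Nat.lt_succ_self k)
  set M := m k with hMdef
  set nn := m (k+1) with hnndef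
  set τ := ∑ i ∈ Finset.Ico M nn, α i with hτdef
  clear_value τ
  have hτpos : 0 < τ := lt_of_lt_of_le (by linarith) hτ1
  set Fv : ℕ → E := fun i => Fnor f' prox lam (z i) with hFvdef
  set Ev : ℕ → E := fun j => ∑ i ∈ Finset.Ico M j, α i • e i with hEvdef
  set a := ‖Fnor f' prox lam (z M)‖ with hadef
  have haFv : ‖Fv M‖ = a := by simp only [hFvdef, hadef]
  have ha0 : 0 ≤ a := by rw [hadef]; exact norm_nonneg _
  clear_value a
  set S := (Finset.Icc (M + 1) nn).sup'
      (Finset.nonempty_Icc.mpr (hm (Nat.lt_succ_self k)))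
      (fun j => ‖∑ i ∈ Finset.Ico M j, α i • e i‖) with hSdef
  have hES' : ∀ j, M < j → j ≤ nn → ‖Ev j‖ ≤ S := by
    intro j h1 h2
    rw [hSdef]
    have := Finset.le_sup' (fun j => ‖∑ i ∈ Finset.Ico M j, α i • e i‖)
      (Finset.mem_Icc.mpr ⟨h1, h2⟩)
    simpa only [hEvdef] using this
  have hS0 : 0 ≤ S :=
    le_trans (norm_nonneg (Ev (M+1))) (hES' (M+1) (Nat.lt_succ_self M) hMn)
  have hES : ∀ j, M ≤ j → j ≤ nn → ‖Ev j‖ ≤ S := by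
    intro j h1 h2
    rcases eq_or_lt_of_le h1 with heq | h1'
    · have hz : Ev j = 0 := by simp [hEvdef, ← heq]
      rw [hz, norm_zero]; exact hS0
    · exact hES' j h1' h2
  clear_value S
  set A := T*a + S with hAdef
  have hA0 : 0 ≤ A := by
    rw [hAdef]; exact add_nonneg (mul_nonneg hT0.le ha0) hS0
  clear_value A
  -- basic recursion facts
  have hzstep : ∀ i : ℕ, z (i+1) = z i - α i • (Fv i + e i) := by
    intro i
    have hg : gseq i = f' (x i) + e i := by rw [he i]; abel
    have hFvi : Fv i = f' (x i) + lam⁻¹ • (z i - x i) := by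
      simp only [hFvdef, Fnor, ← hx i]
    rw [hzrec i, hg, hFvi]
    congr 1
    abel
  have hzdiff : ∀ j, M ≤ j → z j - z M = -(∑ i ∈ Finset.Ico M j, α i • Fv i) - Ev j := by
    intro j hj
    induction j, hj using Nat.le_induction with
    | base => simp [hEvdef]
    | succ j hMj ih =>
      have h1 : z (j+1) - z M = (z j - z M) - α j • (Fv j + e j) := by
        rw [hzstep j]; abel
      rw [h1, ih]
      simp only [hEvdef]
      rw [Finset.sum_Ico_succ_top hMj, Finset.sum_Ico_succ_top hMj, smul_add]
      abel
  -- Lipschitz facts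
  have hxlip : ∀ i j : ℕ, ‖x i - x j‖ ≤ ‖z i - z j‖ := by
    intro i j; rw [hx i, hx j]
    exact prox_lip φ prox lam hlam hφconv hφnebot hφnetop hprox (z i) (z j)
  have hFlip : ∀ i j : ℕ, ‖Fv i - Fv j‖ ≤ LF * ‖z i - z j‖ := by
    intro i j
    have hident : Fv i - Fv j
        = (f' (x i) - f' (x j)) + lam⁻¹ • ((z i - z j) - (x i - x j)) := by
      simp only [hFvdef, Fnor, ← hx i, ← hx j]
      module
    rw [hident]
    have h1 : ‖f' (x i) - f' (x j)‖ ≤ L * ‖x i - x j‖ := hLip _ (hxK i) _ (hxK j)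
    have h2 : ‖lam⁻¹ • ((z i - z j) - (x i - x j))‖
        = lam⁻¹ * ‖(z i - z j) - (x i - x j)‖ := by
      rw [norm_smul, Real.norm_eq_abs, abs_of_pos (inv_pos.mpr hlam)]
    have h3 : ‖(z i - z j) - (x i - x j)‖ ≤ ‖z i - z j‖ + ‖x i - x j‖ := norm_sub_le _ _
    have h4 := hxlip i j
    have h5 : ‖f' (x i) - f' (x j) + lam⁻¹ • ((z i - z j) - (x i - x j))‖
        ≤ ‖f' (x i) - f' (x j)‖ + ‖lam⁻¹ • ((z i - z j) - (x i - x j))‖ := norm_add_le _ _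
    have h6 : lam⁻¹ * ‖(z i - z j) - (x i - x j)‖ ≤ lam⁻¹ * (‖z i - z j‖ + ‖z i - z j‖) := by
      apply mul_le_mul_of_nonneg_left _ (inv_pos.mpr hlam).le
      linarith
    have h7 : L * ‖x i - x j‖ ≤ L * ‖z i - z j‖ := mul_le_mul_of_nonneg_left h4 hL
    have h8 : LF * ‖z i - z j‖ = L * ‖z i - z j‖ + lam⁻¹ * (‖z i - z j‖ + ‖z i - z j‖) := by
      rw [hLFdef, div_eq_mul_inv]; ring
    rw [h8]
    linarith [le_trans h1 h7]
  -- Gronwall-type bound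
  have hGron : ∀ j, j ≤ nn → M ≤ j → ‖z j - z M‖ ≤ 2*A := by
    intro j
    induction j using Nat.strong_induction_on with
    | _ j ih =>
      intro hjn hMj
      have h1 : ‖z j - z M‖ ≤ ‖∑ i ∈ Finset.Ico M j, α i • Fv i‖ + ‖Ev j‖ := by
        rw [hzdiff j hMj]
        calc ‖-(∑ i ∈ Finset.Ico M j, α i • Fv i) - Ev j‖
            ≤ ‖-(∑ i ∈ Finset.Ico M j, α i • Fv i)‖ + ‖Ev j‖ := norm_sub_le _ _
          _ = ‖∑ i ∈ Finset.Ico M j, α i • Fv i‖ + ‖Ev j‖ := by rw [norm_neg]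
      have h2 : ‖∑ i ∈ Finset.Ico M j, α i • Fv i‖
          ≤ ∑ i ∈ Finset.Ico M j, α i * ‖Fv i‖ := by
        refine le_trans (norm_sum_le _ _) (le_of_eq (Finset.sum_congr rfl ?_))
        intro i _
        rw [norm_smul, Real.norm_eq_abs, abs_of_pos (hα i)]
      have h3 : ∀ i ∈ Finset.Ico M j, α i * ‖Fv i‖ ≤ α i * (a + LF*(2*A)) := by
        intro i hi
        obtain ⟨hi1, hi2⟩ := Finset.mem_Ico.mp hi
        have hb : ‖Fv i‖ ≤ ‖Fv M‖ + ‖Fv i - Fv M‖ := by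
          have e1 : Fv i = Fv M + (Fv i - Fv M) := by abel
          calc ‖Fv i‖ = ‖Fv M + (Fv i - Fv M)‖ := by rw [← e1]
            _ ≤ ‖Fv M‖ + ‖Fv i - Fv M‖ := norm_add_le _ _
        have hc := hFlip i M
        have hd := ih i hi2 (le_trans (le_of_lt hi2) hjn) hi1
        have he' := mul_le_mul_of_nonneg_left hd hLFpos.le
        have hFi : ‖Fv i‖ ≤ a + LF*(2*A) := by
          rw [haFv] at hb
          linarith [le_trans hc he']
        exact mul_le_mul_of_nonneg_left hFi (hα i).le
      have h4 : ∑ i ∈ Finset.Ico M j, α i * ‖Fv i‖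
          ≤ (∑ i ∈ Finset.Ico M j, α i) * (a + LF*(2*A)) := by
        rw [Finset.sum_mul]
        exact Finset.sum_le_sum h3
      have h5 : (∑ i ∈ Finset.Ico M j, α i) ≤ T := by
        refine le_trans (le_trans (Finset.sum_le_sum_of_subset_of_nonneg
          (Finset.Ico_subset_Ico_right hjn) ?_) (le_of_eq hτdef.symm)) hτ2
        intro i _ _; exact (hα i).le
      have haLF : 0 ≤ a + LF*(2*A) := by
        have := mul_nonneg hLFpos.le (by linarith : (0:ℝ) ≤ 2*A)
        linarith
      have h6 : (∑ i ∈ Finset.Ico M j, α i) * (a + LF*(2*A)) ≤ T * (a + LF*(2*A)) :=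
        mul_le_mul_of_nonneg_right h5 haLF
      have h7 : ‖Ev j‖ ≤ S := hES j hMj hjn
      have h8 : T * (a + LF*(2*A)) = T*a + (2*LF*T)*A := by ring
      have h9 : (2*LF*T)*A ≤ (ξ/20)*A := mul_le_mul_of_nonneg_right hTc1 hA0
      have h10 : (ξ/20)*A ≤ 1*A := mul_le_mul_of_nonneg_right (by linarith) hA0
      rw [h8] at h6
      have hAeq : T*a + S = A := hAdef.symm
      linarith [h1, le_trans h2 (le_trans h4 h6)]
  -- the correction term R
  set Rv := ∑ i ∈ Finset.Ico M nn, α i • (Fv i - Fv M) with hRdef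
  have hRnorm : ‖Rv‖ ≤ (2*LF*T)*A := by
    have h2 : ‖Rv‖ ≤ ∑ i ∈ Finset.Ico M nn, α i * ‖Fv i - Fv M‖ := by
      rw [hRdef]
      refine le_trans (norm_sum_le _ _) (le_of_eq (Finset.sum_congr rfl ?_))
      intro i _
      rw [norm_smul, Real.norm_eq_abs, abs_of_pos (hα i)]
    have h3 : ∀ i ∈ Finset.Ico M nn, α i * ‖Fv i - Fv M‖ ≤ α i * (LF*(2*A)) := by
      intro i hi
      obtain ⟨hi1, hi2⟩ := Finset.mem_Ico.mp hi
      have hd := hGron i (le_of_lt hi2) hi1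
      have hc := le_trans (hFlip i M) (mul_le_mul_of_nonneg_left hd hLFpos.le)
      exact mul_le_mul_of_nonneg_left hc (hα i).le
    have h4 : ∑ i ∈ Finset.Ico M nn, α i * ‖Fv i - Fv M‖
        ≤ (∑ i ∈ Finset.Ico M nn, α i) * (LF*(2*A)) := by
      rw [Finset.sum_mul]
      exact Finset.sum_le_sum h3
    have h5 : (∑ i ∈ Finset.Ico M nn, α i) * (LF*(2*A)) ≤ T * (LF*(2*A)) := by
      refine mul_le_mul_of_nonneg_right ?_ (mul_nonneg hLFpos.le (by linarith))
      rw [← hτdef]; exact hτ2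
    have h6 : T * (LF*(2*A)) = (2*LF*T)*A := by ring
    linarith [le_trans h2 (le_trans h4 h5)]
  have hweq : z nn - z M = -(τ • Fv M) - Rv - Ev nn := by
    rw [hzdiff nn (le_of_lt hMn)]
    have hsum : ∑ i ∈ Finset.Ico M nn, α i • Fv i = Rv + τ • Fv M := by
      rw [hRdef, hτdef, Finset.sum_smul, ← Finset.sum_add_distrib]
      refine Finset.sum_congr rfl fun i _ => ?_
      rw [smul_sub]; abel
    rw [hsum]; abel
  -- the displacement vectors
  set v := x nn - x M with hvdef
  have hfirm : ‖v‖^2 ≤ ⟪z nn - z M, v⟫ := by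
    have := prox_firm φ prox lam hlam hφconv hφnebot hφnetop hprox (z nn) (z M)
    rw [← hx nn, ← hx M] at this
    rw [hvdef]
    exact this
  have hVw : ‖v‖ ≤ ‖z nn - z M‖ := by rw [hvdef]; exact hxlip nn M
  have hw2A : ‖z nn - z M‖ ≤ 2*A := hGron nn le_rfl (le_of_lt hMn)
  have hdFw : ‖Fv nn - Fv M‖ ≤ LF*(2*A) :=
    le_trans (hFlip nn M) (mul_le_mul_of_nonneg_left hw2A hLFpos.le)
  -- merit function decomposition
  have hHdiff : Hmer f φ f' prox lam ξ (z nn) - Hmer f φ f' prox lam ξ (z M)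
      = (f (x nn) - f (x M)) + ((φ (x nn)).toReal - (φ (x M)).toReal)
        + (ξ*lam/2*‖Fv nn‖^2 - ξ*lam/2*a^2) := by
    rw [← haFv]
    simp only [Hmer, psiR, hFvdef, ← hx nn, ← hx M]
    ring
  -- bound on the φ part
  have hφb : (φ (x nn)).toReal - (φ (x M)).toReal
      ≤ ⟪z nn - x nn, v⟫/lam + ‖v‖^2/(2*lam) := by
    have h1 := prox_real φ prox lam hlam hφnebot hφnetop hprox (z nn) (x M)
      (by rw [hx M]; exact hfin _)
    rw [← hx nn] at h1
    have h2 : ‖z nn - x M‖^2 = ‖z nn - x nn‖^2 + (2*⟪z nn - x nn, v⟫ + ‖v‖^2) := by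
      have e : z nn - x M = (z nn - x nn) + v := by rw [hvdef]; abel
      rw [e, norm_add_sq_real]; ring
    rw [h2, add_div] at h1
    have h4 : (2*⟪z nn - x nn, v⟫ + ‖v‖^2)/(2*lam)
        = ⟪z nn - x nn, v⟫/lam + ‖v‖^2/(2*lam) := by
      field_simp
    linarith [h4 ▸ h1]
  -- descent lemma for f
  have hfb : f (x nn) ≤ f (x M) + ⟪f' (x M), v⟫ + L/2*‖v‖^2 := by
    have := descent_lemma f f' hf _ hKconv L hL hLip (x M) (x nn) (hxK M) (hxK nn)
    rw [← hvdef] at this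
    exact this
  have hcross : ⟪f' (x M) - f' (x nn), v⟫ ≤ L*‖v‖^2 := by
    have h1 := real_inner_le_norm (f' (x M) - f' (x nn)) v
    have h2 := hLip _ (hxK M) _ (hxK nn)
    have h3 : ‖x M - x nn‖ = ‖v‖ := by rw [hvdef, norm_sub_rev]
    rw [h3] at h2
    have h4 : ‖f' (x M) - f' (x nn)‖ * ‖v‖ ≤ (L*‖v‖) * ‖v‖ :=
      mul_le_mul_of_nonneg_right h2 (norm_nonneg v)
    have h5 : (L*‖v‖) * ‖v‖ = L*‖v‖^2 := by ring
    linarith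
  have hFnsplit : ⟪Fv nn, v⟫ = ⟪f' (x nn), v⟫ + ⟪z nn - x nn, v⟫/lam := by
    simp only [hFvdef, Fnor, ← hx nn]
    rw [inner_add_left, real_inner_smul_left, div_eq_inv_mul]
  -- the ψ = f + φ part, bounded using the above
  have hinsplit1 : ⟪f' (x M), v⟫ - ⟪f' (x nn), v⟫ = ⟪f' (x M) - f' (x nn), v⟫ :=
    (inner_sub_left _ _ _).symm
  have hinsplit2 : ⟪Fv nn, v⟫ - ⟪Fv M, v⟫ = ⟪Fv nn - Fv M, v⟫ :=
    (inner_sub_left _ _ _).symm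
  have hC2mul : C2*‖v‖^2 = 3*L/2*‖v‖^2 + 1/(2*lam)*‖v‖^2 := by rw [hC2def]; ring
  have hvhalf : ‖v‖^2/(2*lam) = 1/(2*lam)*‖v‖^2 := by ring
  have hψtotal : (f (x nn) - f (x M)) + ((φ (x nn)).toReal - (φ (x M)).toReal)
      ≤ ⟪Fv M, v⟫ + ⟪Fv nn - Fv M, v⟫ + C2*‖v‖^2 := by
    linarith [hφb, hfb, hcross, hFnsplit, hinsplit1, hinsplit2, hC2mul, hvhalf]
  -- quadratic part
  have hquad : ξ*lam/2*‖Fv nn‖^2 - ξ*lam/2*a^2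
      = ξ*lam*⟪Fv M, Fv nn - Fv M⟫ + ξ*lam/2*‖Fv nn - Fv M‖^2 := by
    have e1 : Fv nn = Fv M + (Fv nn - Fv M) := by abel
    have e2 : ‖Fv nn‖^2 = ‖Fv M‖^2 + 2*⟪Fv M, Fv nn - Fv M⟫ + ‖Fv nn - Fv M‖^2 := by
      conv_lhs => rw [e1]
      rw [norm_add_sq_real]
    rw [e2, haFv]
    ring
  -- decomposition of the normal map difference
  have hlamdec : lam • (Fv nn - Fv M)
      = lam • (f' (x nn) - f' (x M)) + ((z nn - z M) - v) := by
    simp only [hFvdef, Fnor, ← hx nn, ← hx M, hvdef]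
    match_scalars <;> field_simp
  have hinq : lam*⟪Fv M, Fv nn - Fv M⟫
      = lam*⟪Fv M, f' (x nn) - f' (x M)⟫ + ⟪Fv M, z nn - z M⟫ - ⟪Fv M, v⟫ := by
    have h1 : lam*⟪Fv M, Fv nn - Fv M⟫ = ⟪Fv M, lam • (Fv nn - Fv M)⟫ :=
      (real_inner_smul_right _ _ _).symm
    rw [h1, hlamdec, inner_add_right, inner_sub_right, real_inner_smul_right]
    ring
  have hinqξ : ξ*lam*⟪Fv M, Fv nn - Fv M⟫
      = ξ*(lam*⟪Fv M, f' (x nn) - f' (x M)⟫) + ξ*⟪Fv M, z nn - z M⟫ - ξ*⟪Fv M, v⟫ := by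
    rw [mul_assoc, hinq]; ring
  -- inner product bounds
  have hb1 : lam*⟪Fv M, f' (x nn) - f' (x M)⟫ ≤ (lam*L)*(a*‖v‖) := by
    have h1 := real_inner_le_norm (Fv M) (f' (x nn) - f' (x M))
    have h2 := hLip _ (hxK nn) _ (hxK M)
    have h3 : ‖x nn - x M‖ = ‖v‖ := by rw [hvdef]
    rw [h3] at h2
    have h4 : ‖Fv M‖ * ‖f' (x nn) - f' (x M)‖ ≤ ‖Fv M‖ * (L*‖v‖) :=
      mul_le_mul_of_nonneg_left h2 (norm_nonneg _)
    have h5 := mul_le_mul_of_nonneg_left (le_trans h1 h4) hlam.le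
    rw [haFv] at h5
    calc lam*⟪Fv M, f' (x nn) - f' (x M)⟫ ≤ lam*(a*(L*‖v‖)) := h5
      _ = (lam*L)*(a*‖v‖) := by ring
  have hb1ξ : ξ*(lam*⟪Fv M, f' (x nn) - f' (x M)⟫) ≤ ξ*((lam*L)*(a*‖v‖)) :=
    mul_le_mul_of_nonneg_left hb1 hξpos.le
  have hb2 : ⟪Fv M, z nn - z M⟫ ≤ -(τ*a^2) + a*((2*LF*T)*A + S) := by
    rw [hweq, inner_sub_right, inner_sub_right, inner_neg_right, real_inner_smul_right,
      real_inner_self_eq_norm_sq, haFv]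
    have hR1 : -⟪Fv M, Rv⟫ ≤ a*((2*LF*T)*A) := by
      have habs := abs_real_inner_le_norm (Fv M) Rv
      rw [haFv] at habs
      have h2 := mul_le_mul_of_nonneg_left hRnorm ha0
      linarith [neg_abs_le (⟪Fv M, Rv⟫ : ℝ)]
    have hE1 : -⟪Fv M, Ev nn⟫ ≤ a*S := by
      have habs := abs_real_inner_le_norm (Fv M) (Ev nn)
      rw [haFv] at habs
      have h2 := mul_le_mul_of_nonneg_left (hES nn (le_of_lt hMn) le_rfl) ha0
      linarith [neg_abs_le (⟪Fv M, Ev nn⟫ : ℝ)]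
    linarith [hR1, hE1]
  have hb2ξ : ξ*⟪Fv M, z nn - z M⟫ ≤ ξ*(-(τ*a^2) + a*((2*LF*T)*A + S)) :=
    mul_le_mul_of_nonneg_left hb2 hξpos.le
  have hb3a : τ*⟪Fv M, v⟫ ≤ -‖v‖^2 + ‖v‖*((2*LF*T)*A + S) := by
    have hτF : τ • Fv M = -(z nn - z M) - Rv - Ev nn := by rw [hweq]; abel
    have h0 : τ*⟪Fv M, v⟫ = ⟪τ • Fv M, v⟫ := (real_inner_smul_left _ _ _).symm
    rw [h0, hτF, inner_sub_left, inner_sub_left, inner_neg_left]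
    have h1 : -⟪z nn - z M, v⟫ ≤ -‖v‖^2 := by linarith [hfirm]
    have h2 : -⟪Rv, v⟫ ≤ ((2*LF*T)*A)*‖v‖ := by
      have habs := abs_real_inner_le_norm Rv v
      have h2' := mul_le_mul_of_nonneg_right hRnorm (norm_nonneg v)
      linarith [neg_abs_le (⟪Rv, v⟫ : ℝ)]
    have h3 : -⟪Ev nn, v⟫ ≤ S*‖v‖ := by
      have habs := abs_real_inner_le_norm (Ev nn) v
      have h3' := mul_le_mul_of_nonneg_right (hES nn (le_of_lt hMn) le_rfl) (norm_nonneg v)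
      linarith [neg_abs_le (⟪Ev nn, v⟫ : ℝ)]
    have h4 : ‖v‖*((2*LF*T)*A + S) = ((2*LF*T)*A)*‖v‖ + S*‖v‖ := by ring
    linarith
  have hb3b : (1-ξ)*⟪Fv M, v⟫ ≤ (1-ξ)/τ*(-‖v‖^2 + ‖v‖*((2*LF*T)*A + S)) := by
    have h1 : ⟪Fv M, v⟫ ≤ (-‖v‖^2 + ‖v‖*((2*LF*T)*A + S))/τ := by
      rw [le_div_iff₀ hτpos]
      linarith [hb3a]
    have h2 := mul_le_mul_of_nonneg_left h1 (by linarith : (0:ℝ) ≤ 1-ξ)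
    calc (1-ξ)*⟪Fv M, v⟫ ≤ (1-ξ)*((-‖v‖^2 + ‖v‖*((2*LF*T)*A + S))/τ) := h2
      _ = (1-ξ)/τ*(-‖v‖^2 + ‖v‖*((2*LF*T)*A + S)) := by ring
  have hb4 : ⟪Fv nn - Fv M, v⟫ ≤ 4*LF*A^2 := by
    have h1 := real_inner_le_norm (Fv nn - Fv M) v
    have h2 : ‖v‖ ≤ 2*A := le_trans hVw hw2A
    have h3 : ‖Fv nn - Fv M‖*‖v‖ ≤ (LF*(2*A))*(2*A) :=
      mul_le_mul hdFw h2 (norm_nonneg _) (mul_nonneg hLFpos.le (by linarith))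
    have h4 : (LF*(2*A))*(2*A) = 4*LF*A^2 := by ring
    linarith
  have hb5 : ξ*lam/2*‖Fv nn - Fv M‖^2 ≤ 2*ξ*lam*LF^2*A^2 := by
    have h1 : ‖Fv nn - Fv M‖^2 ≤ (LF*(2*A))^2 := pow_le_pow_left₀ (norm_nonneg _) hdFw 2
    have hxilam : (0:ℝ) ≤ ξ*lam/2 := by
      have := mul_nonneg hξpos.le hlam.le; linarith
    have h2 := mul_le_mul_of_nonneg_left h1 hxilam
    have h3 : ξ*lam/2*(LF*(2*A))^2 = 2*ξ*lam*LF^2*A^2 := by ring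
    linarith
  have hC3mul : C3*A^2 = 4*LF*A^2 + 2*ξ*lam*LF^2*A^2 := by rw [hC3def]; ring
  -- substitute A = T*a + S
  rw [hAdef] at hb2ξ hb3b hb4 hb5 hC3mul
  -- apply the scalar inequality
  have hmain := scalar_final ξ (lam*L) T τ a ‖v‖ S (2*LF*T) C2 C3 hT0 hτ1 hτ2 ha0
    (norm_nonneg v) hS0 (mul_nonneg hlam.le hL)
    (mul_nonneg (mul_nonneg (by norm_num) hLFpos.le) hT0.le)
    hξpos hξhalf hξeq hC2pos.le hC3pos.le hTc1 hTc2 hTc4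
  linarith [hHdiff, hψtotal, hquad, hinqξ, hb1ξ, hb2ξ, hb3b, hb4, hb5, hC3mul, hmain]
end

section
/- Let ξ ≥ 0. Suppose {z^k} ⊂ ℝ^d is a bounded sequence with F_nor(z^k) → 0 and ψ(prox_{λφ}(z^k)) → ψ* for some ψ* ∈ ℝ as k → ∞. Then the set 𝔄 of accumulation points of {z^k} is nonempty and compact; every z̄ ∈ 𝔄 satisfies F_nor(z̄) = 0 and prox_{λφ}(z̄) ∈ crit ψ; and for every z̄ ∈ 𝔄 one has ψ(prox_{λφ}(z̄)) = ψ* and H_ξ(z̄) = ψ*. -/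
open MeasureTheory Filter Real Set Topology
open scoped ENNReal NNReal

variable {d : ℕ}

local notation "E" => EuclideanSpace ℝ (Fin d)
local notation "⟪" x ", " y "⟫" => @inner ℝ _ _ x y

lemma phi_prox_ne_top (φ : E → EReal) (prox : E → E) (lam : ℝ)
    (hφnetop : ∃ v : E, φ v ≠ ⊤)
    (hprox : ∀ u v : E,
      φ (prox u) + ((‖u - prox u‖ ^ 2 / (2 * lam) : ℝ) : EReal)
        ≤ φ v + ((‖u - v‖ ^ 2 / (2 * lam) : ℝ) : EReal))
    (u : E) : φ (prox u) ≠ ⊤ := by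
  obtain ⟨v, hv⟩ := hφnetop
  intro htop
  have h := hprox u v
  rw [htop, EReal.top_add_coe] at h
  have : φ v + ((‖u - v‖ ^ 2 / (2 * lam) : ℝ) : EReal) < ⊤ :=
    EReal.add_lt_top hv (EReal.coe_ne_top _)
  exact absurd h (not_le.2 this)

lemma prox_subdiff (φ : E → EReal) (prox : E → E) (lam : ℝ) (hlam : 0 < lam)
    (hφconv : ∀ u v : E, ∀ a b : ℝ, 0 ≤ a → 0 ≤ b → a + b = 1 →
      φ (a • u + b • v) ≤ (a : EReal) * φ u + (b : EReal) * φ v)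
    (hφnebot : ∀ v : E, φ v ≠ ⊥) (hφnetop : ∃ v : E, φ v ≠ ⊤)
    (hprox : ∀ u v : E,
      φ (prox u) + ((‖u - prox u‖ ^ 2 / (2 * lam) : ℝ) : EReal)
        ≤ φ v + ((‖u - v‖ ^ 2 / (2 * lam) : ℝ) : EReal))
    (u : E) : lam⁻¹ • (u - prox u) ∈ subdiff φ (prox u) := by
  have hlamne : lam ≠ 0 := ne_of_gt hlam
  have hL : (0:ℝ) < 2 * lam := by linarith
  have hL' : (2 * lam) ≠ 0 := ne_of_gt hL
  set x := prox u with hx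
  set p := u - x with hp
  have hxt : φ x ≠ ⊤ := phi_prox_ne_top φ prox lam hφnetop hprox u
  have hax : φ x = (((φ x).toReal : ℝ) : EReal) := (EReal.coe_toReal hxt (hφnebot x)).symm
  set a := (φ x).toReal with ha
  intro y
  by_cases hyt : φ y = ⊤
  · rw [hyt]; exact le_top
  have hby : φ y = (((φ y).toReal : ℝ) : EReal) := (EReal.coe_toReal hyt (hφnebot y)).symm
  set b := (φ y).toReal with hb
  rw [hax, hby, ← EReal.coe_add, EReal.coe_le_coe_iff]
  have hinner : ⟪lam⁻¹ • p, y - x⟫ = lam⁻¹ * ⟪p, y - x⟫ := real_inner_smul_left _ _ _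
  set ip := (⟪p, y - x⟫ : ℝ) with hip
  set ny := ‖y - x‖ ^ 2 with hny
  have hny0 : 0 ≤ ny := sq_nonneg _
  have key : ∀ t : ℝ, 0 < t → t ≤ 1 →
      a + lam⁻¹ * ip ≤ b + t * (ny / (2 * lam)) := by
    intro t ht ht1
    have htne : t ≠ 0 := ne_of_gt ht
    set w := (1 - t) • x + t • y with hw
    have hconv := hφconv x y (1 - t) t (by linarith) (le_of_lt ht) (by ring)
    rw [hax, hby] at hconv
    have hcoe : ((1 - t : ℝ) : EReal) * ((a : ℝ) : EReal) + ((t : ℝ) : EReal) * ((b : ℝ) : EReal)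
        = (((1 - t) * a + t * b : ℝ) : EReal) := by
      rw [← EReal.coe_mul, ← EReal.coe_mul, ← EReal.coe_add]
    rw [hcoe] at hconv
    have hwt : φ w ≠ ⊤ := fun h => by
      rw [h] at hconv; exact absurd hconv (not_le.2 (EReal.coe_lt_top _))
    have hcw : φ w = (((φ w).toReal : ℝ) : EReal) := (EReal.coe_toReal hwt (hφnebot w)).symm
    set c := (φ w).toReal with hc
    rw [hcw, EReal.coe_le_coe_iff] at hconv
    have hpw := hprox u w
    rw [← hx, hax, hcw, ← EReal.coe_add, ← EReal.coe_add, EReal.coe_le_coe_iff] at hpw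
    rw [← hp] at hpw
    have huw : u - w = p - t • (y - x) := by rw [hw, hp]; module
    have hnorm : ‖u - w‖ ^ 2 = ‖p‖ ^ 2 - 2 * (t * ip) + t ^ 2 * ny := by
      rw [huw, @norm_sub_sq_real, real_inner_smul_right, norm_smul, hny, hip]
      simp [mul_pow, abs_of_pos ht]
    rw [hnorm] at hpw
    have hpw2 := mul_le_mul_of_nonneg_right hpw (le_of_lt hL)
    rw [add_mul, add_mul, div_mul_cancel₀ _ hL', div_mul_cancel₀ _ hL'] at hpw2
    have hconv2 := mul_le_mul_of_nonneg_right hconv (le_of_lt hL)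
    have h6 : t * a * (2 * lam) + 2 * t * ip ≤ t * b * (2 * lam) + t ^ 2 * ny := by
      nlinarith [hpw2, hconv2]
    have h7 := (div_le_div_iff_of_pos_right (mul_pos ht hL)).2 h6
    have e1 : (t * a * (2 * lam) + 2 * t * ip) / (t * (2 * lam)) = a + lam⁻¹ * ip := by
      field_simp
    have e2 : (t * b * (2 * lam) + t ^ 2 * ny) / (t * (2 * lam)) = b + t * (ny / (2 * lam)) := by
      field_simp
    rw [e1, e2] at h7
    exact h7
  rw [hinner]
  by_contra hcon
  push_neg at hcon
  have hε0 : 0 < a + lam⁻¹ * ip - b := by linarith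
  set ε := a + lam⁻¹ * ip - b with hε
  set C := ny / (2 * lam) with hC
  have hC0 : 0 ≤ C := div_nonneg hny0 (by linarith)
  have ht0 : (0:ℝ) < min 1 (ε / (C + 1)) := lt_min one_pos (div_pos hε0 (by linarith))
  have hk := key _ ht0 (min_le_left _ _)
  have htC : min 1 (ε / (C + 1)) * C ≤ ε / (C + 1) * C :=
    mul_le_mul_of_nonneg_right (min_le_right _ _) hC0
  have hfin : ε / (C + 1) * C < ε := by
    rw [div_mul_eq_mul_div, div_lt_iff₀ (by linarith)]
    nlinarith
  linarith

lemma subdiff_real (φ : E → EReal) {x y v : E} (hv : v ∈ subdiff φ x)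
    (hxb : φ x ≠ ⊥) (hyt : φ y ≠ ⊤) (hyb : φ y ≠ ⊥) :
    (φ x).toReal + ⟪v, y - x⟫ ≤ (φ y).toReal := by
  have h := hv y
  have hxt : φ x ≠ ⊤ := by
    intro hh
    rw [hh, EReal.top_add_coe] at h
    exact hyt (top_le_iff.1 h)
  rw [(EReal.coe_toReal hxt hxb).symm, (EReal.coe_toReal hyt hyb).symm,
    ← EReal.coe_add, EReal.coe_le_coe_iff] at h
  exact h

lemma prox_lipschitz (φ : E → EReal) (prox : E → E) (lam : ℝ) (hlam : 0 < lam)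
    (hφconv : ∀ u v : E, ∀ a b : ℝ, 0 ≤ a → 0 ≤ b → a + b = 1 →
      φ (a • u + b • v) ≤ (a : EReal) * φ u + (b : EReal) * φ v)
    (hφnebot : ∀ v : E, φ v ≠ ⊥) (hφnetop : ∃ v : E, φ v ≠ ⊤)
    (hprox : ∀ u v : E,
      φ (prox u) + ((‖u - prox u‖ ^ 2 / (2 * lam) : ℝ) : EReal)
        ≤ φ v + ((‖u - v‖ ^ 2 / (2 * lam) : ℝ) : EReal))
    (u w : E) : ‖prox u - prox w‖ ≤ ‖u - w‖ := by
  have hu := prox_subdiff φ prox lam hlam hφconv hφnebot hφnetop hprox u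
  have hw := prox_subdiff φ prox lam hlam hφconv hφnebot hφnetop hprox w
  have hut : φ (prox u) ≠ ⊤ := phi_prox_ne_top φ prox lam hφnetop hprox u
  have hwt : φ (prox w) ≠ ⊤ := phi_prox_ne_top φ prox lam hφnetop hprox w
  have h1 := subdiff_real φ hu (hφnebot _) hwt (hφnebot _)
  have h2 := subdiff_real φ hw (hφnebot _) hut (hφnebot _)
  -- monotonicity
  have hmono : ⟪lam⁻¹ • (u - prox u) - lam⁻¹ • (w - prox w), prox w - prox u⟫ ≤ 0 := by
    have := add_le_add h1 h2
    have hrev : (⟪lam⁻¹ • (w - prox w), prox u - prox w⟫ : ℝ)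
        = -⟪lam⁻¹ • (w - prox w), prox w - prox u⟫ := by
      rw [← inner_neg_right]; congr 1; abel
    rw [inner_sub_left]
    linarith [this, hrev.symm.le, hrev.le]
  have hexp : ⟪lam⁻¹ • (u - prox u) - lam⁻¹ • (w - prox w), prox w - prox u⟫
      = lam⁻¹ * (⟪u - w, prox w - prox u⟫ + ‖prox w - prox u‖ ^ 2) := by
    rw [← smul_sub, real_inner_smul_left]
    congr 1
    have : u - prox u - (w - prox w) = (u - w) - (prox u - prox w) := by abel
    rw [this, inner_sub_left]
    have : (⟪prox u - prox w, prox w - prox u⟫ : ℝ) = -‖prox w - prox u‖ ^ 2 := by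
      rw [show prox u - prox w = -(prox w - prox u) by abel, inner_neg_left,
        real_inner_self_eq_norm_sq]
    rw [this]; ring
  rw [hexp] at hmono
  have hinv : (0:ℝ) < lam⁻¹ := inv_pos.2 hlam
  have h3 : ‖prox u - prox w‖ ^ 2 ≤ ⟪u - w, prox u - prox w⟫ := by
    have hb : ⟪u - w, prox w - prox u⟫ + ‖prox w - prox u‖ ^ 2 ≤ 0 := by
      nlinarith [hmono, hinv]
    have hswap : (⟪u - w, prox w - prox u⟫ : ℝ) = -⟪u - w, prox u - prox w⟫ := by
      rw [← inner_neg_right]; congr 1; abel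
    rw [hswap] at hb
    rw [norm_sub_rev] at hb
    linarith
  have h4 : (⟪u - w, prox u - prox w⟫ : ℝ) ≤ ‖u - w‖ * ‖prox u - prox w‖ :=
    real_inner_le_norm _ _
  nlinarith [h3, h4, norm_nonneg (u - w), norm_nonneg (prox u - prox w)]


/-- Properties of the set of accumulation points. -/
theorem stmt12
    (f : E → ℝ) (f' : E → E) (φ : E → EReal) (prox : E → E) (lam : ℝ)
    (hlam : 0 < lam)
    (hf : ∀ v : E, HasGradientAt f (f' v) v) (hf'cont : Continuous f')
    (hφconv : ∀ u v : E, ∀ a b : ℝ, 0 ≤ a → 0 ≤ b → a + b = 1 →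
      φ (a • u + b • v) ≤ (a : EReal) * φ u + (b : EReal) * φ v)
    (hφlsc : LowerSemicontinuous φ)
    (hφnebot : ∀ v : E, φ v ≠ ⊥) (hφnetop : ∃ v : E, φ v ≠ ⊤)
    (hprox : ∀ u v : E,
      φ (prox u) + ((‖u - prox u‖ ^ 2 / (2 * lam) : ℝ) : EReal)
        ≤ φ v + ((‖u - v‖ ^ 2 / (2 * lam) : ℝ) : EReal))
    (ξ : ℝ) (hξ : 0 ≤ ξ)
    (z : ℕ → E) (hbdd : ∃ R : ℝ, ∀ k, ‖z k‖ ≤ R)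
    (hFnor : Tendsto (fun k => Fnor f' prox lam (z k)) atTop (nhds 0))
    (ψstar : ℝ)
    (hψ : Tendsto (fun k => psiR f φ (prox (z k))) atTop (nhds ψstar)) :
    ∀ 𝔄 : Set E,
      𝔄 = {zbar : E | ∃ q : ℕ → ℕ, StrictMono q ∧
            Tendsto (fun k => z (q k)) atTop (nhds zbar)} →
      𝔄.Nonempty ∧ IsCompact 𝔄 ∧
        ∀ zbar ∈ 𝔄,
          Fnor f' prox lam zbar = 0 ∧
          -f' (prox zbar) ∈ subdiff φ (prox zbar) ∧
          psiR f φ (prox zbar) = ψstar ∧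
          Hmer f φ f' prox lam ξ zbar = ψstar := by
  intro 𝔄 h𝔄
  obtain ⟨R, hR⟩ := hbdd
  have hproxlip : ∀ u w : E, ‖prox u - prox w‖ ≤ ‖u - w‖ :=
    prox_lipschitz φ prox lam hlam hφconv hφnebot hφnetop hprox
  have hproxcont : Continuous prox := by
    refine LipschitzWith.continuous (K := 1) ?_
    refine LipschitzWith.of_dist_le_mul fun u w => ?_
    rw [dist_eq_norm, dist_eq_norm]
    simpa using hproxlip u w
  have hfc : Continuous f := by
    rw [continuous_iff_continuousAt]
    exact fun v => (hf v).continuousAt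
  have hFnorCont : Continuous (Fnor f' prox lam) := by
    unfold Fnor
    exact (hf'cont.comp hproxcont).add ((continuous_id.sub hproxcont).const_smul lam⁻¹)
  have hmem : ∀ k, z k ∈ Metric.closedBall (0 : E) R := by
    intro k; rw [Metric.mem_closedBall, dist_zero_right]; exact hR k
  -- nonempty
  obtain ⟨x0, -, q0, hq0, ht0⟩ :=
    tendsto_subseq_of_bounded Metric.isBounded_closedBall hmem
  have hne : 𝔄.Nonempty := ⟨x0, by rw [h𝔄]; exact ⟨q0, hq0, ht0⟩⟩
  -- compactness
  have hset : 𝔄 = {x : E | MapClusterPt x atTop z} := by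
    rw [h𝔄]; ext x
    constructor
    · rintro ⟨q, hq, hqt⟩
      exact MapClusterPt.of_comp hq.tendsto_atTop hqt.mapClusterPt
    · intro hx
      obtain ⟨ψ, hψ1, hψ2⟩ := TopologicalSpace.FirstCountableTopology.tendsto_subseq hx
      exact ⟨ψ, hψ1, hψ2⟩
  have hclosed : IsClosed 𝔄 := by rw [hset]; exact isClosed_setOf_clusterPt
  have hsubball : 𝔄 ⊆ Metric.closedBall (0 : E) R := by
    rw [h𝔄]
    rintro x ⟨q, hq, hqt⟩
    rw [Metric.mem_closedBall, dist_zero_right]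
    exact le_of_tendsto hqt.norm (Eventually.of_forall fun k => hR (q k))
  have hcpt : IsCompact 𝔄 :=
    (isCompact_closedBall (0 : E) R).of_isClosed_subset hclosed hsubball
  refine ⟨hne, hcpt, ?_⟩
  intro zbar hzbar
  rw [h𝔄] at hzbar
  obtain ⟨q, hq, hqt⟩ := hzbar
  have hq_at : Tendsto q atTop atTop := hq.tendsto_atTop
  have hxk : Tendsto (fun k => prox (z (q k))) atTop (nhds (prox zbar)) :=
    (hproxcont.tendsto zbar).comp hqt
  have hF0 : Fnor f' prox lam zbar = 0 :=
    tendsto_nhds_unique ((hFnorCont.tendsto zbar).comp hqt) (hFnor.comp hq_at)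
  have hsubd := prox_subdiff φ prox lam hlam hφconv hφnebot hφnetop hprox zbar
  have hneg : -f' (prox zbar) = lam⁻¹ • (zbar - prox zbar) := by
    have h := hF0
    unfold Fnor at h
    exact neg_eq_of_add_eq_zero_right h
  -- psi convergence
  set xb := prox zbar with hxb
  set vb := lam⁻¹ • (zbar - xb) with hvb
  have hlow : ∀ k : ℕ, (φ xb).toReal + ⟪vb, prox (z (q k)) - xb⟫ ≤ (φ (prox (z (q k)))).toReal :=
    fun k => subdiff_real φ hsubd (hφnebot _)
      (phi_prox_ne_top φ prox lam hφnetop hprox _) (hφnebot _)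
  have hup : ∀ k : ℕ, (φ (prox (z (q k)))).toReal
      + ⟪lam⁻¹ • (z (q k) - prox (z (q k))), xb - prox (z (q k))⟫ ≤ (φ xb).toReal :=
    fun k => subdiff_real φ
      (prox_subdiff φ prox lam hlam hφconv hφnebot hφnetop hprox (z (q k)))
      (hφnebot _) (phi_prox_ne_top φ prox lam hφnetop hprox _) (hφnebot _)
  have hdiff0 : Tendsto (fun k => prox (z (q k)) - xb) atTop (nhds 0) := by
    have := hxk.sub (tendsto_const_nhds (x := xb))
    simpa using this
  have hlowlim : Tendsto (fun k => (φ xb).toReal + ⟪vb, prox (z (q k)) - xb⟫) atTop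
      (nhds ((φ xb).toReal)) := by
    have : Tendsto (fun k => (⟪vb, prox (z (q k)) - xb⟫ : ℝ)) atTop (nhds 0) := by
      have := Filter.Tendsto.inner (𝕜 := ℝ) (tendsto_const_nhds (x := vb)) hdiff0
      simpa using this
    simpa using (tendsto_const_nhds (x := (φ xb).toReal)).add this
  have hvk : Tendsto (fun k => lam⁻¹ • (z (q k) - prox (z (q k)))) atTop (nhds vb) := by
    rw [hvb, hxb]
    exact (hqt.sub hxk).const_smul _
  have hdiff0' : Tendsto (fun k => xb - prox (z (q k))) atTop (nhds 0) := by
    have := (tendsto_const_nhds (x := xb)).sub hxk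
    simpa using this
  have huplim : Tendsto (fun k => (φ xb).toReal
      - ⟪lam⁻¹ • (z (q k) - prox (z (q k))), xb - prox (z (q k))⟫) atTop
      (nhds ((φ xb).toReal)) := by
    have : Tendsto (fun k =>
        (⟪lam⁻¹ • (z (q k) - prox (z (q k))), xb - prox (z (q k))⟫ : ℝ)) atTop (nhds 0) := by
      have := Filter.Tendsto.inner (𝕜 := ℝ) hvk hdiff0'
      simpa using this
    simpa using (tendsto_const_nhds (x := (φ xb).toReal)).sub this
  have hak : Tendsto (fun k => (φ (prox (z (q k)))).toReal) atTop (nhds ((φ xb).toReal)) := by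
    refine tendsto_of_tendsto_of_tendsto_of_le_of_le hlowlim huplim
      (fun k => hlow k) (fun k => ?_)
    linarith [hup k]
  have hpsilim : Tendsto (fun k => psiR f φ (prox (z (q k)))) atTop
      (nhds (psiR f φ xb)) := by
    unfold psiR
    exact ((hfc.tendsto xb).comp hxk).add hak
  have hpsieq : psiR f φ (prox zbar) = ψstar :=
    tendsto_nhds_unique hpsilim (hψ.comp hq_at)
  refine ⟨hF0, by rw [hneg]; exact hsubd, hpsieq, ?_⟩
  unfold Hmer
  rw [hF0, hpsieq]
  simp
end
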